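/- arXiv:1412.6559 — 10 statements merged into one kernel-verified Lean document; each statement's English description precedes it below -/
import Mathlib

section
/- Let (L, R) be an AWFS on C. If maps (c, d) : g → g' in C^2 between underlying maps of R-algebras ĝ = (g, p) and ĝ' = (g', p') commute with the canonical lifting operations against all L-coalgebras, then (c, d) is a morphism of R-algebras, i.e. c ∘ p = p' ∘ E(c, d). Consequently the functor from R-algebras to maps-equipped-with-coalgebra-lifting-operations is fully faithful. -/
open CategoryTheory

universe v u

/-- A functorial factorisation on `C`. -/
structure FunctorialFactorisation (C : Type u) [Category.{v} C] where
  E : Arrow C ⥤ C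
  l : Arrow.leftFunc ⟶ E
  r : E ⟶ Arrow.rightFunc
  fac : ∀ f : Arrow C, l.app f ≫ r.app f = f.hom

namespace FunctorialFactorisation

variable {C : Type u} [Category.{v} C] (ff : FunctorialFactorisation C)

/-- The counit square `ε_f = (1, ρ f) : λ f → f`. -/
def εhom (f : Arrow C) : Arrow.mk (ff.l.app f) ⟶ f :=
  Arrow.homMk (u := 𝟙 f.left) (v := ff.r.app f) (by exact (Category.id_comp _).trans (ff.fac f).symm)

/-- The unit square `η_f = (λ f, 1) : f → ρ f`. -/
def ηhom (f : Arrow C) : f ⟶ Arrow.mk (ff.r.app f) :=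
  Arrow.homMk (u := ff.l.app f) (v := 𝟙 f.right) (by exact (ff.fac f).trans (Category.comp_id _).symm)

end FunctorialFactorisation

/-- An algebraic weak factorisation system on `C`: a functorial factorisation `(λ, E, ρ)`
together with an extension of `(L, ε)` to a comonad over the domain functor, an extension of
`(R, η)` to a monad over the codomain functor, and a distributive law of the comonad over the
monad (with prescribed domain/codomain components).  Since the comultiplication and
multiplication squares have one identity component, all the data is in the maps
`comul f : E f ⟶ E (λ f)` and `mul f : E (ρ f) ⟶ E f`. -/
structure AWFS (C : Type u) [Category.{v} C] where
  ff : FunctorialFactorisation C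
  comul : ∀ f : Arrow C, ff.E.obj f ⟶ ff.E.obj (Arrow.mk (ff.l.app f))
  mul : ∀ f : Arrow C, ff.E.obj (Arrow.mk (ff.r.app f)) ⟶ ff.E.obj f
  comul_w : ∀ f : Arrow C, ff.l.app f ≫ comul f = ff.l.app (Arrow.mk (ff.l.app f))
  mul_w : ∀ f : Arrow C, mul f ≫ ff.r.app f = ff.r.app (Arrow.mk (ff.r.app f))
  comul_counit : ∀ f : Arrow C,
    comul f ≫ ff.r.app (Arrow.mk (ff.l.app f)) = 𝟙 (ff.E.obj f)
  comul_counit' : ∀ f : Arrow C, comul f ≫ ff.E.map (ff.εhom f) = 𝟙 (ff.E.obj f)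
  mul_unit : ∀ f : Arrow C, ff.l.app (Arrow.mk (ff.r.app f)) ≫ mul f = 𝟙 (ff.E.obj f)
  mul_unit' : ∀ f : Arrow C, ff.E.map (ff.ηhom f) ≫ mul f = 𝟙 (ff.E.obj f)
  comul_coassoc : ∀ f : Arrow C,
    comul f ≫ comul (Arrow.mk (ff.l.app f)) =
      comul f ≫ ff.E.map (Arrow.homMk (u := 𝟙 f.left) (v := comul f)
        (by exact (Category.id_comp _).trans (comul_w f).symm) :
          Arrow.mk (ff.l.app f) ⟶ Arrow.mk (ff.l.app (Arrow.mk (ff.l.app f))))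
  mul_assoc : ∀ f : Arrow C,
    mul (Arrow.mk (ff.r.app f)) ≫ mul f =
      ff.E.map (Arrow.homMk (u := mul f) (v := 𝟙 f.right)
        (by exact (mul_w f).trans (Category.comp_id _).symm) :
          Arrow.mk (ff.r.app (Arrow.mk (ff.r.app f))) ⟶ Arrow.mk (ff.r.app f)) ≫ mul f
  distrib : ∀ f : Arrow C,
    comul (Arrow.mk (ff.r.app f)) ≫
      ff.E.map (Arrow.homMk (u := comul f) (v := mul f)
        (by exact (comul_counit f).trans (mul_unit f).symm) :
          Arrow.mk (ff.l.app (Arrow.mk (ff.r.app f))) ⟶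
            Arrow.mk (ff.r.app (Arrow.mk (ff.l.app f)))) ≫
      mul (Arrow.mk (ff.l.app f)) = mul f ≫ comul f

namespace AWFS

variable {C : Type u} [Category.{v} C] (A : AWFS C)

/-- A coalgebra for the comonad `L` of an AWFS: since `L` is a comonad over the domain
functor, a coalgebra structure on `f : A ⟶ B` is a single map `s : B ⟶ E f`. -/
structure Coalgebra (f : Arrow C) where
  s : f.right ⟶ A.ff.E.obj f
  w : f.hom ≫ s = A.ff.l.app f
  counit : s ≫ A.ff.r.app f = 𝟙 f.right
  coassoc : s ≫ A.comul f =
    s ≫ A.ff.E.map (Arrow.homMk (u := 𝟙 f.left) (v := s)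
      (by exact (Category.id_comp _).trans w.symm) : f ⟶ Arrow.mk (A.ff.l.app f))

/-- An algebra for the monad `R` of an AWFS: since `R` is a monad over the codomain
functor, an algebra structure on `g : C ⟶ D` is a single map `p : E g ⟶ C`. -/
structure Algebra (g : Arrow C) where
  p : A.ff.E.obj g ⟶ g.left
  w : p ≫ g.hom = A.ff.r.app g
  unit : A.ff.l.app g ≫ p = 𝟙 g.left
  assoc : A.mul g ≫ p =
    A.ff.E.map (Arrow.homMk (u := p) (v := 𝟙 g.right)
      (by exact w.trans (Category.comp_id _).symm) : Arrow.mk (A.ff.r.app g) ⟶ g) ≫ p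

/-- The canonical diagonal filler of an `L`-coalgebra against an `R`-algebra. -/
def fill {f g : Arrow C} (cf : A.Coalgebra f) (ag : A.Algebra g) (sq : f ⟶ g) :
    f.right ⟶ g.left :=
  cf.s ≫ A.ff.E.map sq ≫ ag.p

end AWFS

/-- Let `(L, R)` be an AWFS on `C`.  If a square `(c, d) : g → g'` between the underlying
maps of `R`-algebras `(g, p)` and `(g', p')` commutes with the canonical lifting operations
against all `L`-coalgebras, then it is a morphism of `R`-algebras: `c ∘ p = p' ∘ E(c, d)`.
(Hence the functor from `R`-algebras to maps equipped with coalgebra lifting operations is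
fully faithful.) -/
theorem AWFS.algebra_hom_of_commutes_with_liftings
    {C : Type u} [Category.{v} C] (A : AWFS C)
    {g g' : Arrow C} (ag : A.Algebra g) (ag' : A.Algebra g') (cd : g ⟶ g')
    (h : ∀ (f : Arrow C) (cf : A.Coalgebra f) (sq : f ⟶ g),
      A.fill cf ag sq ≫ cd.left = A.fill cf ag' (sq ≫ cd)) :
    ag.p ≫ cd.left = A.ff.E.map cd ≫ ag'.p := by
  let cf : A.Coalgebra (Arrow.mk (A.ff.l.app g)) :=
    { s := A.comul g
      w := A.comul_w g
      counit := A.comul_counit g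
      coassoc := A.comul_coassoc g }
  have := h (Arrow.mk (A.ff.l.app g)) cf (A.ff.εhom g)
  simpa [AWFS.fill, cf, A.ff.E.map_comp, reassoc_of% (A.comul_counit' g)] using this
end

section
/- Let R be a monad on the arrow category C^2 such that: (a) every identity map 1_A carries an R-algebra structure 1̂_A; (b) for each f : A → B the square (f, f) is an algebra map 1̂_A → 1̂_B; and (c) for each R-algebra ĝ : A → B the square (g, 1_B) is an algebra map ĝ → 1̂_B. Then R is isomorphic to a monad over the codomain functor, and the algebra structures on identity arrows are unique. -/
open CategoryTheory

universe v u

namespace MonadOverCodAux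

variable {C : Type u} [Category.{v} C]

/-- Bundle of the hypotheses. -/
structure Setup (T : Monad (Arrow C)) where
  idAlg : ∀ X : C, T.obj (Arrow.mk (𝟙 X)) ⟶ Arrow.mk (𝟙 X)
  idAlg_unit : ∀ X : C, T.η.app (Arrow.mk (𝟙 X)) ≫ idAlg X = 𝟙 (Arrow.mk (𝟙 X))
  idAlg_assoc : ∀ X : C,
      T.μ.app (Arrow.mk (𝟙 X)) ≫ idAlg X = T.map (idAlg X) ≫ idAlg X
  hb : ∀ {X Y : C} (f : X ⟶ Y),
      T.map (Arrow.homMk (u := f) (v := f) (by simp) :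
          Arrow.mk (𝟙 X) ⟶ Arrow.mk (𝟙 Y)) ≫ idAlg Y =
        idAlg X ≫ (Arrow.homMk (u := f) (v := f) (by simp) :
          Arrow.mk (𝟙 X) ⟶ Arrow.mk (𝟙 Y))
  hc : ∀ (g : Arrow C) (a : T.obj g ⟶ g),
      T.η.app g ≫ a = 𝟙 g → T.μ.app g ≫ a = T.map a ≫ a →
      T.map (Arrow.homMk (u := g.hom) (v := 𝟙 g.right) (by simp) :
          g ⟶ Arrow.mk (𝟙 g.right)) ≫ idAlg g.right =
        a ≫ (Arrow.homMk (u := g.hom) (v := 𝟙 g.right) (by simp) :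
          g ⟶ Arrow.mk (𝟙 g.right))

variable {T : Monad (Arrow C)} (S : Setup T)

/-- The canonical map from an arrow to the identity on its codomain. -/
def toId (f : Arrow C) : f ⟶ Arrow.mk (𝟙 f.right) :=
  Arrow.homMk (u := f.hom) (v := 𝟙 f.right) (by simp)

@[simp] lemma toId_left (f : Arrow C) : (toId (C := C) f).left = f.hom := rfl
@[simp] lemma toId_right (f : Arrow C) : (toId (C := C) f).right = 𝟙 f.right := rfl

/-- The comparison map `T f ⟶ 1_{cod f}`. -/
def σ (f : Arrow C) : T.obj f ⟶ Arrow.mk (𝟙 f.right) :=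
  T.map (toId f) ≫ S.idAlg f.right

/-- The codomain comparison. -/
def ρ (f : Arrow C) : (T.obj f).right ⟶ f.right := (σ S f).right

lemma eta_sigma (f : Arrow C) : T.η.app f ≫ σ S f = toId f := by
  rw [σ, ← Category.assoc, ← T.η.naturality (toId f)]
  simp [S.idAlg_unit]

lemma sq_comm {f g : Arrow C} (φ : f ⟶ g) :
    φ ≫ toId g = toId f ≫ (Arrow.homMk (u := φ.right) (v := φ.right) (by simp) :
      Arrow.mk (𝟙 f.right) ⟶ Arrow.mk (𝟙 g.right)) := by
  apply Arrow.hom_ext <;> simp [toId]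

lemma sigma_nat {f g : Arrow C} (φ : f ⟶ g) :
    T.map φ ≫ σ S g = σ S f ≫ (Arrow.homMk (u := φ.right) (v := φ.right) (by simp) :
      Arrow.mk (𝟙 f.right) ⟶ Arrow.mk (𝟙 g.right)) := by
  rw [σ, ← Category.assoc, ← T.map_comp, sq_comm φ, T.map_comp, Category.assoc, S.hb φ.right,
    ← Category.assoc]
  rfl

lemma rho_nat {f g : Arrow C} (φ : f ⟶ g) :
    (T.map φ).right ≫ ρ S g = ρ S f ≫ φ.right := by
  have := congrArg CommaMorphism.right (sigma_nat S φ)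
  simpa [ρ] using this

lemma eta_rho (f : Arrow C) : (T.η.app f).right ≫ ρ S f = 𝟙 f.right := by
  have := congrArg CommaMorphism.right (eta_sigma S f)
  simpa [ρ] using this

lemma sigma_T (f : Arrow C) :
    σ S (T.obj f) = T.μ.app f ≫ toId (T.obj f) := by
  exact S.hc (T.obj f) (T.μ.app f) (T.left_unit f) (T.assoc f).symm

lemma mu_rho (f : Arrow C) : (T.μ.app f).right = ρ S (T.obj f) := by
  have := congrArg CommaMorphism.right (sigma_T S f)
  simpa [ρ] using this.symm

lemma rho_eta (f : Arrow C) : ρ S f ≫ (T.η.app f).right = 𝟙 (T.obj f).right := by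
  have h := sigma_nat S (T.η.app f)
  rw [sigma_T S f, ← Category.assoc, T.right_unit f, Category.id_comp] at h
  have := congrArg CommaMorphism.right h
  simpa [ρ] using this.symm


/-- The iso replacing `T f` by an arrow with codomain `cod f`. -/
def e (f : Arrow C) : T.obj f ≅ Arrow.mk ((T.obj f).hom ≫ ρ S f) where
  hom := Arrow.homMk (u := 𝟙 (T.obj f).left) (v := ρ S f) (by simp)
  inv := Arrow.homMk (u := 𝟙 (T.obj f).left) (v := (T.η.app f).right)
    (by simp [Category.assoc, rho_eta S f])
  hom_inv_id := by
    apply Arrow.hom_ext <;> simp [rho_eta S f]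
  inv_hom_id := by
    apply Arrow.hom_ext <;> simp [eta_rho S f]

@[simp] lemma e_hom_left (f : Arrow C) : (e S f).hom.left = 𝟙 (T.obj f).left := rfl
@[simp] lemma e_hom_right (f : Arrow C) : (e S f).hom.right = ρ S f := rfl
@[simp] lemma e_inv_left (f : Arrow C) : (e S f).inv.left = 𝟙 (T.obj f).left := rfl
@[simp] lemma e_inv_right (f : Arrow C) : (e S f).inv.right = (T.η.app f).right := rfl

/-- The conjugated endofunctor. -/
def F : Arrow C ⥤ Arrow C where
  obj f := Arrow.mk ((T.obj f).hom ≫ ρ S f)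
  map {f g} φ := (e S f).inv ≫ T.map φ ≫ (e S g).hom
  map_id f := by simp
  map_comp {f g h} φ ψ := by simp

/-- The natural isomorphism `T ≅ F`. -/
def i : (T : Arrow C ⥤ Arrow C) ≅ F S :=
  NatIso.ofComponents (fun f => e S f) (fun {f g} φ => by simp [F])

/-- The transported monad. -/
def T' : Monad (Arrow C) := T.transport (i S)

lemma T'_map_right {f g : Arrow C} (φ : f ⟶ g) :
    ((T' S).map φ).right = φ.right := by
  have h1 := rho_nat S φ
  simp only [T', Monad.transport, F, i]
  simp [reassoc_of% (eta_rho S f), h1, eta_rho]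

lemma T'_eta_right (f : Arrow C) :
    ((T' S).η.app f).right = 𝟙 f.right := by
  simp [T', Monad.transport, i, eta_rho, NatIso.ofComponents_hom_app]
  exact eta_rho S f

lemma T'_mu_right (f : Arrow C) :
    ((T' S).μ.app f).right = 𝟙 ((F S).obj f).right := by
  have h1 := rho_nat S (e S f).inv
  simp only [e_inv_right] at h1
  simp only [T', Monad.transport, i, NatTrans.comp_app, NatTrans.hcomp_app]
  simp [mu_rho S f, reassoc_of% h1, eta_rho, F, NatIso.ofComponents_hom_app,
    NatIso.ofComponents_inv_app]
  change (T.η.app _).right ≫ (T.map (e S f).inv).right ≫ ρ S (T.obj f) ≫ ρ S f = _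
  simp [reassoc_of% h1, reassoc_of% eta_rho S, eta_rho]


/-- The monad isomorphism `T ≅ T'`. -/
def monadIso : T ≅ T' S :=
  MonadIso.mk (i S) (fun f => rfl)
    (fun f => by
      simp only [T', Monad.transport, NatTrans.comp_app, NatTrans.hcomp_app, Category.assoc]
      simp [← T.map_comp_assoc])

lemma idAlg_uniq (X : C) (a : T.obj (Arrow.mk (𝟙 X)) ⟶ Arrow.mk (𝟙 X))
    (h1 : T.η.app _ ≫ a = 𝟙 _) (h2 : T.μ.app _ ≫ a = T.map a ≫ a) :
    a = S.idAlg X := by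
  have h := S.hc (Arrow.mk (𝟙 X)) a h1 h2
  have hι : (Arrow.homMk (u := (Arrow.mk (𝟙 X)).hom) (v := 𝟙 (Arrow.mk (𝟙 X)).right)
        (by simp) : Arrow.mk (𝟙 X) ⟶ Arrow.mk (𝟙 (Arrow.mk (𝟙 X)).right)) =
      𝟙 (Arrow.mk (𝟙 X)) := by
    apply Arrow.hom_ext <;> simp
  rw [hι] at h
  simpa using h.symm

end MonadOverCodAux

open MonadOverCodAux

/-- Let `R` be a monad on the arrow category `C²` such that (a) every identity map `1_A`
carries an `R`-algebra structure `1̂_A`; (b) for every `f : A ⟶ B` the square `(f, f)` is an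
algebra map `1̂_A → 1̂_B`; (c) for every `R`-algebra `ĝ : A → B` the square `(g, 1_B)` is an
algebra map `ĝ → 1̂_B`.  Then `R` is isomorphic to a monad over the codomain functor, and
the algebra structures on identity arrows are unique. -/
theorem monad_iso_over_codomain {C : Type u} [Category.{v} C] (T : Monad (Arrow C))
    (idAlg : ∀ X : C, T.obj (Arrow.mk (𝟙 X)) ⟶ Arrow.mk (𝟙 X))
    (idAlg_unit : ∀ X : C, T.η.app (Arrow.mk (𝟙 X)) ≫ idAlg X = 𝟙 (Arrow.mk (𝟙 X)))
    (idAlg_assoc : ∀ X : C,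
      T.μ.app (Arrow.mk (𝟙 X)) ≫ idAlg X = T.map (idAlg X) ≫ idAlg X)
    (hb : ∀ {X Y : C} (f : X ⟶ Y),
      T.map (Arrow.homMk (u := f) (v := f) (by simp) :
          Arrow.mk (𝟙 X) ⟶ Arrow.mk (𝟙 Y)) ≫ idAlg Y =
        idAlg X ≫ (Arrow.homMk (u := f) (v := f) (by simp) :
          Arrow.mk (𝟙 X) ⟶ Arrow.mk (𝟙 Y)))
    (hc : ∀ (g : Arrow C) (a : T.obj g ⟶ g),
      T.η.app g ≫ a = 𝟙 g → T.μ.app g ≫ a = T.map a ≫ a →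
      T.map (Arrow.homMk (u := g.hom) (v := 𝟙 g.right) (by simp) :
          g ⟶ Arrow.mk (𝟙 g.right)) ≫ idAlg g.right =
        a ≫ (Arrow.homMk (u := g.hom) (v := 𝟙 g.right) (by simp) :
          g ⟶ Arrow.mk (𝟙 g.right))) :
    (∃ (T' : Monad (Arrow C)) (_ : T ≅ T')
        (hobj : ∀ f : Arrow C, (T'.obj f).right = f.right),
      (∀ {f g : Arrow C} (φ : f ⟶ g),
        (T'.map φ).right = eqToHom (hobj f) ≫ φ.right ≫ eqToHom (hobj g).symm) ∧
      (∀ f : Arrow C, (T'.η.app f).right = eqToHom (hobj f).symm) ∧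
      (∀ f : Arrow C, (T'.μ.app f).right = eqToHom (hobj (T'.obj f)))) ∧
    (∀ (X : C) (a a' : T.obj (Arrow.mk (𝟙 X)) ⟶ Arrow.mk (𝟙 X)),
      T.η.app _ ≫ a = 𝟙 _ → T.μ.app _ ≫ a = T.map a ≫ a →
      T.η.app _ ≫ a' = 𝟙 _ → T.μ.app _ ≫ a' = T.map a' ≫ a' → a = a') := by
  let S : Setup T :=
    { idAlg := idAlg, idAlg_unit := idAlg_unit, idAlg_assoc := idAlg_assoc,
      hb := fun f => hb f, hc := hc }
  constructor
  · refine ⟨T' S, monadIso S, fun f => rfl, ?_, ?_, ?_⟩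
    · intro f g φ
      rw [T'_map_right S φ]
      exact (by simp : φ.right = 𝟙 _ ≫ φ.right ≫ 𝟙 _)
    · intro f
      rw [T'_eta_right S f]
      exact rfl
    · intro f
      rw [T'_mu_right S f]
      exact rfl
  · intro X a a' ha1 ha2 ha1' ha2'
    rw [idAlg_uniq S X a ha1 ha2, idAlg_uniq S X a' ha1' ha2']
end

section
/- Let C be a category with pullbacks and R a monad on C^2 over the codomain functor. Then the forgetful functor U : Alg(R) → C^2 is a discrete pullback-fibration: for every R-algebra ĝ on g and every pullback square (h, k) : f → g in C^2, there is a unique R-algebra structure f̂ on f making (h, k) an algebra map f̂ → ĝ, and this algebra map is cartesian. -/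
open CategoryTheory
open CategoryTheory.Limits

universe v u

/-- An (unbundled) algebra structure for a monad on the arrow category. -/
def IsAlgStr {C : Type u} [Category.{v} C] (T : Monad (Arrow C)) {f : Arrow C}
    (a : T.obj f ⟶ f) : Prop :=
  T.η.app f ≫ a = 𝟙 f ∧ T.μ.app f ≫ a = T.map a ≫ a

/-- Let `C` have pullbacks and `R` be a monad on `C²` over the codomain functor.  Then the
forgetful functor `Alg(R) → C²` is a discrete pullback-fibration: for every `R`-algebra
structure on `g` and every pullback square `(h, k) : f → g` there is a unique `R`-algebra
structure on `f` making `(h, k)` an algebra map, and this algebra map is cartesian. -/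
theorem algebras_discrete_pullback_fibration
    {C : Type u} [Category.{v} C] [HasPullbacks C] (T : Monad (Arrow C))
    (hobj : ∀ f : Arrow C, (T.obj f).right = f.right)
    (hmap : ∀ {f g : Arrow C} (φ : f ⟶ g),
      (T.map φ).right = eqToHom (hobj f) ≫ φ.right ≫ eqToHom (hobj g).symm)
    (hη : ∀ f : Arrow C, (T.η.app f).right = eqToHom (hobj f).symm)
    (hμ : ∀ f : Arrow C, (T.μ.app f).right = eqToHom (hobj (T.obj f))) :
    ∀ (g : Arrow C) (a : T.obj g ⟶ g), IsAlgStr T a →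
      ∀ (f : Arrow C) (sq : f ⟶ g), IsPullback sq.left f.hom g.hom sq.right →
        (∃! b : T.obj f ⟶ f, IsAlgStr T b ∧ T.map sq ≫ a = b ≫ sq) ∧
        (∀ b : T.obj f ⟶ f, IsAlgStr T b → T.map sq ≫ a = b ≫ sq →
          ∀ (e : Arrow C) (c : T.obj e ⟶ e), IsAlgStr T c →
            ∀ ρ : e ⟶ g, T.map ρ ≫ a = c ≫ ρ →
              ∀ τ : e ⟶ f, τ ≫ sq = ρ → T.map τ ≫ b = c ≫ τ) := by
  intro g a ha f sq hpb
  obtain ⟨ha1, ha2⟩ := ha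
  -- the right component of any algebra structure is forced to be `eqToHom`
  have rightEq : ∀ (x : Arrow C) (d : T.obj x ⟶ x), T.η.app x ≫ d = 𝟙 x →
      d.right = eqToHom (hobj x) := by
    intro x d hd
    have h := congrArg CommaMorphism.right hd
    simp only [Arrow.comp_right, Arrow.id_right, hη] at h
    calc d.right = eqToHom (hobj x) ≫ (eqToHom (hobj x).symm ≫ d.right) := by simp
      _ = eqToHom (hobj x) := by rw [h]; simp
  have haR : a.right = eqToHom (hobj g) := rightEq g a ha1
  -- construct the left component of the candidate algebra structure `b`
  have hw : ((T.map sq).left ≫ a.left) ≫ g.hom = ((T.obj f).hom ≫ eqToHom (hobj f)) ≫ sq.right := by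
    rw [Category.assoc, Arrow.w a, ← Category.assoc, Arrow.w (T.map sq), hmap, haR]
    simp
  set bl : (T.obj f).left ⟶ f.left :=
    hpb.lift ((T.map sq).left ≫ a.left) ((T.obj f).hom ≫ eqToHom (hobj f)) hw with hbl
  have hbl1 : bl ≫ sq.left = (T.map sq).left ≫ a.left := hpb.lift_fst _ _ _
  have hbl2 : bl ≫ f.hom = (T.obj f).hom ≫ eqToHom (hobj f) := hpb.lift_snd _ _ _
  set b : T.obj f ⟶ f := { left := bl, right := eqToHom (hobj f), w := by simpa using hbl2 }
    with hbdef
  have hbL : b.left = bl := rfl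
  have hbR : b.right = eqToHom (hobj f) := rfl
  -- `b` makes the square an algebra map
  have hbsq : T.map sq ≫ a = b ≫ sq := by
    apply CommaMorphism.ext
    · simpa [hbL] using hbl1.symm
    · show (T.map sq).right ≫ a.right = b.right ≫ sq.right
      rw [hmap, haR, hbR]; simp
  -- unit law for `b`
  have hbη : T.η.app f ≫ b = 𝟙 f := by
    apply CommaMorphism.ext
    · show (T.η.app f).left ≫ b.left = 𝟙 f.left
      apply hpb.hom_ext
      · have hn : sq ≫ T.η.app g = T.η.app f ≫ T.map sq := (T.η.naturality sq).symm ▸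
          (by simpa using T.η.naturality sq)
        have hnL : sq.left ≫ (T.η.app g).left = (T.η.app f).left ≫ (T.map sq).left := by
          have := congrArg CommaMorphism.left hn
          simpa using this
        have haL : (T.η.app g).left ≫ a.left = 𝟙 g.left := by
          have := congrArg CommaMorphism.left ha1
          simpa using this
        rw [Category.assoc, hbL, hbl1, ← Category.assoc, ← hnL, Category.assoc, haL]
        simp
      · have hηw : (T.η.app f).left ≫ (T.obj f).hom = f.hom ≫ (T.η.app f).right :=
          Arrow.w (T.η.app f)
        rw [Category.assoc, hbL, hbl2, ← Category.assoc, hηw, hη]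
        simp
    · show (T.η.app f).right ≫ b.right = 𝟙 f.right
      rw [hη, hbR]; simp
  -- multiplication law for `b`
  have hbμ : T.μ.app f ≫ b = T.map b ≫ b := by
    apply CommaMorphism.ext
    · show (T.μ.app f).left ≫ b.left = (T.map b).left ≫ b.left
      apply hpb.hom_ext
      · have hnμ : T.map (T.map sq) ≫ T.μ.app g = T.μ.app f ≫ T.map sq := by
          simpa using (T.μ.naturality sq)
        have hnμL : (T.map (T.map sq)).left ≫ (T.μ.app g).left
            = (T.μ.app f).left ≫ (T.map sq).left := by
          have := congrArg CommaMorphism.left hnμ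
          simpa using this
        have haμL : (T.μ.app g).left ≫ a.left = (T.map a).left ≫ a.left := by
          have := congrArg CommaMorphism.left ha2
          simpa using this
        have hmapcomp : T.map (T.map sq ≫ a) = T.map (b ≫ sq) := by rw [hbsq]
        have hmcL : (T.map (T.map sq)).left ≫ (T.map a).left
            = (T.map b).left ≫ (T.map sq).left := by
          have := congrArg CommaMorphism.left
            (show T.map (T.map sq) ≫ T.map a = T.map b ≫ T.map sq by
              rw [← T.map_comp, ← T.map_comp, hbsq])
          simpa using this
        calc ((T.μ.app f).left ≫ b.left) ≫ sq.left
            = (T.μ.app f).left ≫ (T.map sq).left ≫ a.left := by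
              rw [Category.assoc, hbL, hbl1]
          _ = ((T.map (T.map sq)).left ≫ (T.μ.app g).left) ≫ a.left := by
              rw [hnμL]; simp [Category.assoc]
          _ = (T.map (T.map sq)).left ≫ (T.map a).left ≫ a.left := by
              rw [Category.assoc, haμL]
          _ = ((T.map b).left ≫ (T.map sq).left) ≫ a.left := by
              rw [← Category.assoc, hmcL]
          _ = ((T.map b).left ≫ b.left) ≫ sq.left := by
              rw [Category.assoc, Category.assoc, hbL, hbl1]
      · have hμw : (T.μ.app f).left ≫ (T.obj f).hom
            = (T.obj (T.obj f)).hom ≫ (T.μ.app f).right := Arrow.w (T.μ.app f)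
        have hmbw : (T.map b).left ≫ (T.obj f).hom
            = (T.obj (T.obj f)).hom ≫ (T.map b).right := Arrow.w (T.map b)
        rw [Category.assoc, Category.assoc, hbL, hbl2, ← Category.assoc, ← Category.assoc,
          hμw, hmbw, hmap, hμ, hbR]
        simp
    · show (T.μ.app f).right ≫ b.right = (T.map b).right ≫ b.right
      rw [hμ, hmap, hbR]; simp
  -- cartesianness (also yields uniqueness)
  have cart : ∀ b' : T.obj f ⟶ f, IsAlgStr T b' → T.map sq ≫ a = b' ≫ sq →
      ∀ (e : Arrow C) (c : T.obj e ⟶ e), IsAlgStr T c →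
        ∀ ρ : e ⟶ g, T.map ρ ≫ a = c ≫ ρ →
          ∀ τ : e ⟶ f, τ ≫ sq = ρ → T.map τ ≫ b' = c ≫ τ := by
    intro b' hb' hb'sq e c hc ρ hρ τ hτ
    have hb'R : b'.right = eqToHom (hobj f) := rightEq f b' hb'.1
    have hcR : c.right = eqToHom (hobj e) := rightEq e c hc.1
    apply CommaMorphism.ext
    · show (T.map τ).left ≫ b'.left = c.left ≫ τ.left
      apply hpb.hom_ext
      · have hb'L : b'.left ≫ sq.left = (T.map sq).left ≫ a.left := by
          have := congrArg CommaMorphism.left hb'sq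
          simpa using this.symm
        have hρL : (T.map ρ).left ≫ a.left = c.left ≫ ρ.left := by
          have := congrArg CommaMorphism.left hρ
          simpa using this
        have hτρ : (T.map τ).left ≫ (T.map sq).left = (T.map ρ).left := by
          have := congrArg CommaMorphism.left (show T.map τ ≫ T.map sq = T.map ρ by
            rw [← T.map_comp, hτ])
          simpa using this
        have hτL : τ.left ≫ sq.left = ρ.left := by
          have := congrArg CommaMorphism.left hτ
          simpa using this
        calc ((T.map τ).left ≫ b'.left) ≫ sq.left
            = (T.map τ).left ≫ (T.map sq).left ≫ a.left := by
              rw [Category.assoc, hb'L]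
          _ = (T.map ρ).left ≫ a.left := by rw [← Category.assoc, hτρ]
          _ = c.left ≫ ρ.left := hρL
          _ = (c.left ≫ τ.left) ≫ sq.left := by rw [Category.assoc, hτL]
      · have hb'w : b'.left ≫ f.hom = (T.obj f).hom ≫ b'.right := Arrow.w b'
        have hτw : τ.left ≫ f.hom = e.hom ≫ τ.right := Arrow.w τ
        have hcw : c.left ≫ e.hom = (T.obj e).hom ≫ c.right := Arrow.w c
        have hmτw : (T.map τ).left ≫ (T.obj f).hom
            = (T.obj e).hom ≫ (T.map τ).right := Arrow.w (T.map τ)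
        rw [Category.assoc, Category.assoc, hb'w, hτw, ← Category.assoc, ← Category.assoc,
          hmτw, hcw, hmap, hb'R, hcR]
        simp
    · show (T.map τ).right ≫ b'.right = c.right ≫ τ.right
      rw [hmap, hb'R, hcR]; simp
  constructor
  · refine ⟨b, ⟨⟨hbη, hbμ⟩, hbsq⟩, ?_⟩
    intro b' ⟨hb', hb'sq⟩
    have hb'R : b'.right = eqToHom (hobj f) := rightEq f b' hb'.1
    apply CommaMorphism.ext
    · show b'.left = b.left
      apply hpb.hom_ext
      · have := congrArg CommaMorphism.left hb'sq
        simp only [Arrow.comp_left] at this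
        rw [← this, hbL, hbl1]
      · have hb'w : b'.left ≫ f.hom = (T.obj f).hom ≫ b'.right := Arrow.w b'
        rw [hb'w, hb'R, hbL, hbl2]
    · show b'.right = b.right
      rw [hb'R, hbR]
  · exact cart
end

section
/- Let C be a category with pullbacks and R a monad on C^2 whose forgetful functor Alg(R) → C^2 is a discrete pullback-fibration. Then R is isomorphic to a monad over the codomain functor. -/
open CategoryTheory
open CategoryTheory.Limits

universe v u

section Aux

variable {C : Type u} [Category.{v} C]


theorem eta_right_isIso [HasPullbacks C] (T : Monad (Arrow C))
    (hex : ∀ (g : Arrow C) (a : T.obj g ⟶ g), IsAlgStr T a →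
      ∀ (f : Arrow C) (sq : f ⟶ g), IsPullback sq.left f.hom g.hom sq.right →
        ∃ b : T.obj f ⟶ f, IsAlgStr T b ∧ T.map sq ≫ a = b ≫ sq)
    (f : Arrow C) : IsIso (T.η.app f).right := by
  set g : Arrow C := T.obj f with hg
  set a : T.obj g ⟶ g := T.μ.app f with ha
  have halg : IsAlgStr T a := ⟨T.left_unit f, (T.assoc f).symm⟩
  set v : f.right ⟶ g.right := (T.η.app f).right with hv
  set p : Arrow C := Arrow.mk (pullback.snd g.hom v) with hp
  have hsqw : pullback.fst g.hom v ≫ g.hom = p.hom ≫ v := pullback.condition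
  set sq : p ⟶ g := Arrow.homMk (u := pullback.fst g.hom v) (v := v) hsqw with hsq
  have hpb : IsPullback sq.left p.hom g.hom sq.right := IsPullback.of_hasPullback g.hom v
  obtain ⟨b, hb, hbsq⟩ := hex g a halg p sq hpb
  have hτw : (T.η.app f).left ≫ g.hom = f.hom ≫ v := Arrow.w (T.η.app f)
  set τ : f ⟶ p := Arrow.homMk (u := pullback.lift (T.η.app f).left f.hom hτw)
    (v := 𝟙 f.right) (by show _ ≫ pullback.snd g.hom v = _; exact (pullback.lift_snd _ _ hτw).trans (Category.comp_id _).symm) with hτ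
  have hτsq : τ ≫ sq = T.η.app f := by
    ext
    · simp [hτ, hsq]; exact pullback.lift_fst _ _ _
    · simp [hτ, hsq, hv]
  set s : g ⟶ p := T.map τ ≫ b with hs
  -- η_f ≫ s = τ
  have h1 : T.η.app f ≫ s = τ := by
    rw [hs, ← Category.assoc, ← T.η.naturality τ, Category.assoc]
    simp [hb.1]
  -- s ≫ sq is an algebra endomorphism of the free algebra
  have h2 : T.map (s ≫ sq) ≫ a = T.μ.app f ≫ (s ≫ sq) := by
    rw [T.map_comp, Category.assoc, hbsq, hs, T.map_comp]
    have hb2 : T.map b ≫ b = T.μ.app p ≫ b := hb.2.symm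
    have hnat : T.map (T.map τ) ≫ T.μ.app p = T.μ.app f ≫ T.map τ := T.μ.naturality τ
    rw [Category.assoc, ← Category.assoc (T.map b), hb2]
    rw [← Category.assoc, ← Category.assoc, hnat]
    simp [hs]
  have h3 : T.η.app f ≫ (s ≫ sq) = T.η.app f := by
    rw [← Category.assoc, h1, hτsq]
  -- freeness : s ≫ sq = 𝟙
  have hfree : s ≫ sq = 𝟙 g := by
    have e1 : T.map (T.η.app f) ≫ (T.map (s ≫ sq) ≫ a) = s ≫ sq := by
      rw [h2, ← Category.assoc, T.right_unit f, Category.id_comp]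
    calc s ≫ sq = T.map (T.η.app f) ≫ T.map (s ≫ sq) ≫ a := e1.symm
      _ = T.map (T.η.app f ≫ s ≫ sq) ≫ a := by simp only [T.map_comp, Category.assoc]
      _ = T.map (T.η.app f) ≫ a := by rw [h3]
      _ = 𝟙 g := T.right_unit f
  have hrv : s.right ≫ v = 𝟙 g.right := by
    have := congrArg CommaMorphism.right hfree
    simpa [hsq] using this
  have hvr : v ≫ s.right = 𝟙 f.right := by
    have := congrArg CommaMorphism.right h1
    simpa [hτ] using this
  exact ⟨s.right, hvr, hrv⟩

lemma eta_right_nat (T : Monad (Arrow C)) {f g : Arrow C} (φ : f ⟶ g) :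
    φ.right ≫ (T.η.app g).right = (T.η.app f).right ≫ (T.map φ).right := by
  simpa using congrArg CommaMorphism.right (T.η.naturality φ)

lemma inv_eta_right_nat (T : Monad (Arrow C)) (hv : ∀ f : Arrow C, IsIso (T.η.app f).right)
    {f g : Arrow C} (φ : f ⟶ g) :
    (T.map φ).right ≫ inv (T.η.app g).right = inv (T.η.app f).right ≫ φ.right := by
  haveI := hv f; haveI := hv g
  rw [IsIso.comp_inv_eq, Category.assoc, eta_right_nat T φ, IsIso.inv_hom_id_assoc]

/-- The codomain-fixing functor isomorphic to `T`. -/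
noncomputable def codFunctor (T : Monad (Arrow C)) (hv : ∀ f : Arrow C, IsIso (T.η.app f).right) :
    Arrow C ⥤ Arrow C where
  obj f := Arrow.mk ((T.obj f).hom ≫ (haveI := hv f; inv (T.η.app f).right))
  map {f g} φ := Arrow.homMk (u := (T.map φ).left) (v := φ.right) (by
    haveI := hv f; haveI := hv g
    show (T.map φ).left ≫ (T.obj g).hom ≫ inv (T.η.app g).right
      = ((T.obj f).hom ≫ inv (T.η.app f).right) ≫ φ.right
    rw [← Category.assoc, Arrow.w (T.map φ)]
    rw [Category.assoc, inv_eta_right_nat T hv φ, Category.assoc])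
  map_id f := by ext <;> simp
  map_comp φ ψ := by ext <;> simp

noncomputable def codIso (T : Monad (Arrow C)) (hv : ∀ f : Arrow C, IsIso (T.η.app f).right) :
    T.toFunctor ≅ codFunctor T hv :=
  NatIso.ofComponents
    (fun f => Arrow.isoMk (Iso.refl _) (haveI := hv f; (asIso (T.η.app f).right).symm)
      (by haveI := hv f; simp [codFunctor]))
    (by
      intro f g φ
      ext
      · simp [codFunctor]; exact (Category.comp_id _).trans (Category.id_comp _).symm
      · haveI := hv f; haveI := hv g
        exact inv_eta_right_nat T hv φ)

lemma transport_eta_right (T : Monad (Arrow C)) (hv : ∀ f : Arrow C, IsIso (T.η.app f).right)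
    (f : Arrow C) : ((T.transport (codIso T hv)).η.app f).right = 𝟙 f.right := by
  haveI := hv f
  show ((T.η ≫ (codIso T hv).hom).app f).right = 𝟙 f.right
  simp [codIso, codFunctor]; exact IsIso.hom_inv_id _

lemma mu_right_eq (T : Monad (Arrow C)) {f : Arrow C} :
    (T.η.app (T.obj f)).right ≫ (T.μ.app f).right = 𝟙 (T.obj f).right := by
  have h := congrArg CommaMorphism.right (T.left_unit f)
  simp only [Arrow.comp_right, Arrow.id_right] at h; exact h

lemma transport_mu_right (T : Monad (Arrow C)) (hv : ∀ f : Arrow C, IsIso (T.η.app f).right)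
    (f : Arrow C) : ((T.transport (codIso T hv)).μ.app f).right = 𝟙 f.right := by
  haveI := hv f
  haveI := hv (T.obj f)
  haveI := hv ((codFunctor T hv).obj f)
  show ((((codIso T hv).inv ◫ (codIso T hv).inv) ≫ T.μ ≫ (codIso T hv).hom).app f).right
    = 𝟙 f.right
  have h1 : ((codIso T hv).inv.app ((codFunctor T hv).obj f)).right
      = (T.η.app ((codFunctor T hv).obj f)).right := by
    rfl
  have h2 : ((codIso T hv).inv.app f).right = (T.η.app f).right := by rfl
  have h4 : ((codIso T hv).hom.app f).right = inv (T.η.app f).right := by rfl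
  have h3 := eta_right_nat T ((codIso T hv).inv.app f)
  rw [h2] at h3
  simp only [NatTrans.comp_app, NatTrans.hcomp_app, Arrow.comp_right, Category.assoc]
  erw [h1, h4, ← Category.assoc, ← h3, Category.assoc,
    ← Category.assoc ((T.η.app (T.obj f)).right), mu_right_eq]
  simp
  erw [Category.id_comp]; exact @IsIso.hom_inv_id _ _ _ _ _ (hv f)

noncomputable def codMonadIso (T : Monad (Arrow C))
    (hv : ∀ f : Arrow C, IsIso (T.η.app f).right) : T ≅ T.transport (codIso T hv) :=
  MonadIso.mk (codIso T hv) (fun _ => rfl) (fun X => by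
    show T.μ.app X ≫ (codIso T hv).hom.app X
      = (T.map ((codIso T hv).hom.app X) ≫ (codIso T hv).hom.app _)
        ≫ ((((codIso T hv).inv ◫ (codIso T hv).inv) ≫ T.μ ≫ (codIso T hv).hom).app X)
    simp only [NatTrans.comp_app, NatTrans.hcomp_app, Category.assoc, Iso.hom_inv_id_app_assoc]
    rw [← Functor.map_comp_assoc, Iso.hom_inv_id_app]
    simp)

end Aux

/-- Let `C` have pullbacks and `R` be a monad on `C²` whose forgetful functor
`Alg(R) → C²` is a discrete pullback-fibration (every `R`-algebra structure lifts uniquely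
and cartesianly along pullback squares).  Then `R` is isomorphic to a monad over the
codomain functor. -/
theorem monad_over_codomain_of_discrete_pullback_fibration
    {C : Type u} [Category.{v} C] [HasPullbacks C] (T : Monad (Arrow C))
    (hdpf : ∀ (g : Arrow C) (a : T.obj g ⟶ g), IsAlgStr T a →
      ∀ (f : Arrow C) (sq : f ⟶ g), IsPullback sq.left f.hom g.hom sq.right →
        (∃! b : T.obj f ⟶ f, IsAlgStr T b ∧ T.map sq ≫ a = b ≫ sq) ∧
        (∀ b : T.obj f ⟶ f, IsAlgStr T b → T.map sq ≫ a = b ≫ sq →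
          ∀ (e : Arrow C) (c : T.obj e ⟶ e), IsAlgStr T c →
            ∀ ρ : e ⟶ g, T.map ρ ≫ a = c ≫ ρ →
              ∀ τ : e ⟶ f, τ ≫ sq = ρ → T.map τ ≫ b = c ≫ τ)) :
    ∃ (T' : Monad (Arrow C)) (_ : T ≅ T')
        (hobj : ∀ f : Arrow C, (T'.obj f).right = f.right),
      (∀ {f g : Arrow C} (φ : f ⟶ g),
        (T'.map φ).right = eqToHom (hobj f) ≫ φ.right ≫ eqToHom (hobj g).symm) ∧
      (∀ f : Arrow C, (T'.η.app f).right = eqToHom (hobj f).symm) ∧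
      (∀ f : Arrow C, (T'.μ.app f).right = eqToHom (hobj (T'.obj f))) := by
  have hv : ∀ f : Arrow C, IsIso (T.η.app f).right :=
    fun f => eta_right_isIso T
      (fun g a ha f' sq hpb => ((hdpf g a ha f' sq hpb).1).exists) f
  refine ⟨T.transport (codIso T hv), codMonadIso T hv, fun _ => rfl, ?_, ?_, ?_⟩
  · intro f g φ
    show ((codFunctor T hv).map φ).right = _
    show φ.right = 𝟙 _ ≫ φ.right ≫ 𝟙 _
    simp [codFunctor]
  · intro f
    exact transport_eta_right T hv f
  · intro f
    exact transport_mu_right T hv f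
end

section
/- The forgetful functor from the category of split epimorphisms in C to the arrow category C^2 is strictly monadic whenever C has binary coproducts; moreover the resulting monad on C^2 is algebraically free on its underlying pointed endofunctor, i.e. algebras for the underlying pointed endofunctor coincide with algebras for the monad. -/
open CategoryTheory
open CategoryTheory.Limits

universe v u

/-- The category of split epimorphisms in `C`: objects are maps equipped with a chosen
section. -/
structure SplitEpiObj (C : Type u) [Category.{v} C] where
  X : C
  Y : C
  g : X ⟶ Y
  p : Y ⟶ X
  split : p ≫ g = 𝟙 Y

/-- Morphisms of split epimorphisms: serially commuting squares. -/
structure SplitEpiHom {C : Type u} [Category.{v} C] (a b : SplitEpiObj C) where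
  u : a.X ⟶ b.X
  s : a.Y ⟶ b.Y
  wg : u ≫ b.g = a.g ≫ s
  wp : a.p ≫ u = s ≫ b.p

namespace SplitEpiHom

variable {C : Type u} [Category.{v} C]

theorem ext' {a b : SplitEpiObj C} {φ ψ : SplitEpiHom a b}
    (h1 : φ.u = ψ.u) (h2 : φ.s = ψ.s) : φ = ψ := by
  cases φ; cases ψ; cases h1; cases h2; rfl

end SplitEpiHom

instance {C : Type u} [Category.{v} C] : Category (SplitEpiObj C) where
  Hom := SplitEpiHom
  id a := ⟨𝟙 a.X, 𝟙 a.Y, by simp, by simp⟩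
  comp φ ψ := ⟨φ.u ≫ ψ.u, φ.s ≫ ψ.s,
    by rw [Category.assoc, ψ.wg, ← Category.assoc, φ.wg, Category.assoc],
    by rw [← Category.assoc, φ.wp, Category.assoc, ψ.wp, ← Category.assoc]⟩
  id_comp φ := SplitEpiHom.ext' (by simp) (by simp)
  comp_id φ := SplitEpiHom.ext' (by simp) (by simp)
  assoc φ ψ χ := SplitEpiHom.ext' (by simp) (by simp)

/-- The forgetful functor from split epimorphisms to the arrow category. -/
def forgetSplitEpi (C : Type u) [Category.{v} C] : SplitEpiObj C ⥤ Arrow C where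
  obj a := Arrow.mk a.g
  map {a b} φ := Arrow.homMk (u := φ.u) (v := φ.s) φ.wg
  map_id a := by apply Arrow.hom_ext <;> rfl
  map_comp φ ψ := by apply Arrow.hom_ext <;> rfl

/-- The free split epimorphism `⟨f, 1⟩ : A + B → B` on `f : A → B`. -/
noncomputable def freeSplitEpi {C : Type u} [Category.{v} C] [HasBinaryCoproducts C]
    (f : Arrow C) : SplitEpiObj C where
  X := f.left ⨿ f.right
  Y := f.right
  g := coprod.desc f.hom (𝟙 f.right)
  p := coprod.inr
  split := by exact coprod.inr_desc f.hom (𝟙 f.right)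

-- ===== auxiliary development =====

namespace SplitEpiAux

variable {C : Type u} [Category.{v} C]

@[simp] lemma comp_u {a b c : SplitEpiObj C} (φ : a ⟶ b) (ψ : b ⟶ c) :
    (φ ≫ ψ).u = φ.u ≫ ψ.u := rfl

@[simp] lemma comp_s {a b c : SplitEpiObj C} (φ : a ⟶ b) (ψ : b ⟶ c) :
    (φ ≫ ψ).s = φ.s ≫ ψ.s := rfl

@[simp] lemma id_u (a : SplitEpiObj C) : (𝟙 a : a ⟶ a).u = 𝟙 a.X := rfl
@[simp] lemma id_s (a : SplitEpiObj C) : (𝟙 a : a ⟶ a).s = 𝟙 a.Y := rfl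

lemma mk_eq {X Y : C} {g : X ⟶ Y} {p p' : Y ⟶ X} {h : p ≫ g = 𝟙 Y} {h' : p' ≫ g = 𝟙 Y}
    (e : p = p') : (SplitEpiObj.mk X Y g p h) = SplitEpiObj.mk X Y g p' h' := by
  subst e; rfl

lemma eqToHom_u {a b : SplitEpiObj C} (h : a = b) :
    (eqToHom h).u = eqToHom (congrArg SplitEpiObj.X h) := by subst h; rfl

lemma eqToHom_s {a b : SplitEpiObj C} (h : a = b) :
    (eqToHom h).s = eqToHom (congrArg SplitEpiObj.Y h) := by subst h; rfl

variable (C) [HasBinaryCoproducts C]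

noncomputable def freeF : Arrow C ⥤ SplitEpiObj C where
  obj f := freeSplitEpi f
  map {f g} φ :=
    { u := coprod.map φ.left φ.right
      s := φ.right
      wg := by dsimp [freeSplitEpi]; ext <;> simp [Arrow.w]
      wp := by dsimp [freeSplitEpi]; simp }
  map_id f := SplitEpiHom.ext' (by dsimp [freeSplitEpi]; ext <;> simp) rfl
  map_comp φ ψ := SplitEpiHom.ext' (by dsimp [freeSplitEpi]; ext <;> simp) rfl

noncomputable def adjSE : freeF C ⊣ forgetSplitEpi C :=
  Adjunction.mkOfHomEquiv
    { homEquiv := fun f a =>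
        { toFun := fun ψ => Arrow.homMk (u := coprod.inl ≫ ψ.u) (v := ψ.s)
            (by dsimp [freeF, freeSplitEpi] at ψ; dsimp [forgetSplitEpi]; rw [Category.assoc]
                rw [ψ.wg]; simp; exact coprod.inl_desc (f.hom ≫ ψ.s) ψ.s)
          invFun := fun (k : f ⟶ Arrow.mk a.g) =>
            { u := coprod.desc k.left (k.right ≫ a.p)
              s := k.right
              wg := by dsimp [freeF, freeSplitEpi]; ext <;>
                simp [Arrow.w, a.split, forgetSplitEpi]
              wp := by exact coprod.inr_desc k.left (k.right ≫ a.p) }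
          left_inv := fun ψ => SplitEpiHom.ext'
            (by dsimp [freeF, freeSplitEpi]; ext
                · exact coprod.inl_desc _ _
                · exact (coprod.inr_desc _ _).trans ψ.wp.symm)
            rfl
          right_inv := fun k => by
            apply Arrow.hom_ext
            · exact coprod.inl_desc _ _
            · rfl }
      homEquiv_naturality_left_symm := fun φ k => SplitEpiHom.ext'
        (by apply coprod.hom_ext
            · erw [coprod.inl_desc, coprod.inl_map_assoc, coprod.inl_desc]
              rfl
            · erw [coprod.inr_desc, coprod.inr_map_assoc, coprod.inr_desc]
              exact Category.assoc _ _ _) rfl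
      homEquiv_naturality_right := fun ψ ρ => by
        apply Arrow.hom_ext
        · exact (Category.assoc _ _ _).symm
        · rfl }

lemma unit_left (f : Arrow C) : ((adjSE C).unit.app f).left = coprod.inl := by
  simp [adjSE]; dsimp [freeF, freeSplitEpi]; exact Category.comp_id _

lemma unit_right (f : Arrow C) : ((adjSE C).unit.app f).right = 𝟙 f.right := by
  simp [adjSE]; rfl

lemma counit_u (a : SplitEpiObj C) :
    ((adjSE C).counit.app a).u = coprod.desc (𝟙 a.X) a.p := by
  simp [adjSE]; exact congrArg (coprod.desc (𝟙 a.X)) (Category.id_comp a.p)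

lemma counit_s (a : SplitEpiObj C) : ((adjSE C).counit.app a).s = 𝟙 a.Y := by
  simp [adjSE]; rfl

end SplitEpiAux

namespace SplitEpiAux

variable {C : Type u} [Category.{v} C] [HasBinaryCoproducts C]

lemma Tmap_left {x y : Arrow C} (φ : x ⟶ y) :
    ((adjSE C).toMonad.map φ).left = coprod.map φ.left φ.right := rfl

lemma Tmap_right {x y : Arrow C} (φ : x ⟶ y) :
    ((adjSE C).toMonad.map φ).right = φ.right := rfl

lemma mu_left (f : Arrow C) : ((adjSE C).toMonad.μ.app f).left
    = coprod.desc (𝟙 (f.left ⨿ f.right)) coprod.inr := by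
  have h : ((adjSE C).toMonad.μ.app f).left
      = ((adjSE C).counit.app ((freeF C).obj f)).u := rfl
  rw [h, counit_u]
  rfl

lemma mu_right (f : Arrow C) : ((adjSE C).toMonad.μ.app f).right = 𝟙 f.right := by
  have h : ((adjSE C).toMonad.μ.app f).right
      = ((adjSE C).counit.app ((freeF C).obj f)).s := rfl
  rw [h, counit_s]; rfl

lemma Tobj_hom (f : Arrow C) :
    ((adjSE C).toMonad.obj f).hom = coprod.desc f.hom (𝟙 f.right) := rfl

lemma eta_left (f : Arrow C) : ((adjSE C).toMonad.η.app f).left = coprod.inl :=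
  unit_left C f

lemma eta_right (f : Arrow C) : ((adjSE C).toMonad.η.app f).right = 𝟙 f.right :=
  unit_right C f

lemma alg_right (A : (adjSE C).toMonad.Algebra) : A.a.right = 𝟙 A.A.right := by
  have h := congrArg CommaMorphism.right A.unit
  simp [eta_right, unit_right] at h
  exact (Category.id_comp _).symm.trans h

lemma alg_inl (A : (adjSE C).toMonad.Algebra) :
    coprod.inl ≫ A.a.left = 𝟙 A.A.left := by
  have h := congrArg CommaMorphism.left A.unit
  simp [eta_left, unit_left] at h
  exact h

variable (C)

noncomputable def Galg : (adjSE C).toMonad.Algebra ⥤ SplitEpiObj C where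
  obj A :=
    { X := A.A.left
      Y := A.A.right
      g := A.A.hom
      p := coprod.inr ≫ A.a.left
      split := by
        erw [Category.assoc, Arrow.w A.a, Tobj_hom]
        simp [alg_right A]
        erw [Category.comp_id, coprod.inr_desc] }
  map {A B} φ :=
    { u := φ.f.left
      s := φ.f.right
      wg := Arrow.w φ.f
      wp := by
        have h := congrArg (fun z => (coprod.inr : _ ⟶ _) ≫ CommaMorphism.left z) φ.h
        dsimp [forgetSplitEpi, freeF, freeSplitEpi] at h
        refine (Category.assoc _ _ _).trans (h.symm.trans ?_)
        exact coprod.inr_map_assoc _ _ _ }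
  map_id A := SplitEpiHom.ext' rfl rfl
  map_comp φ ψ := SplitEpiHom.ext' rfl rfl

end SplitEpiAux

namespace SplitEpiAux

variable {C : Type u} [Category.{v} C] [HasBinaryCoproducts C]

lemma alg_mk_eq {D : Type*} [Category D] {T : Monad D} {A : D}
    {a a' : T.obj A ⟶ A} {u u' s s'} (e : a = a') :
    Monad.Algebra.mk A a u s = Monad.Algebra.mk A a' u' s' := by subst e; rfl

lemma eqToHom_f {D : Type*} [Category D] {T : Monad D} {A B : T.Algebra} (h : A = B) :
    (eqToHom h).f = eqToHom (congrArg Monad.Algebra.A h) := by subst h; rfl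

lemma comp_G_eq_id : Monad.comparison (adjSE C) ⋙ Galg C = 𝟭 (SplitEpiObj C) := by
  have hobj : ∀ a, (Monad.comparison (adjSE C) ⋙ Galg C).obj a = (𝟭 (SplitEpiObj C)).obj a := by
    intro a
    obtain ⟨X, Y, g, p, hs⟩ := a
    refine mk_eq ?_
    show coprod.inr ≫ ((adjSE C).counit.app ⟨X, Y, g, p, hs⟩).u = p
    rw [counit_u]
    exact coprod.inr_desc _ _
  refine CategoryTheory.Functor.ext hobj (fun a b φ => ?_)
  refine SplitEpiHom.ext' ?_ ?_
  · show φ.u = _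
    simp [eqToHom_u]
    erw [eqToHom_refl, eqToHom_refl, Category.id_comp, Category.comp_id]
  · show φ.s = _
    simp [eqToHom_s]
    erw [eqToHom_refl, eqToHom_refl, Category.id_comp, Category.comp_id]

lemma G_comp_eq_id : Galg C ⋙ Monad.comparison (adjSE C) = 𝟭 (adjSE C).toMonad.Algebra := by
  have hobj : ∀ A, (Galg C ⋙ Monad.comparison (adjSE C)).obj A
      = (𝟭 (adjSE C).toMonad.Algebra).obj A := by
    intro A
    obtain ⟨Af, aa, hu, ha⟩ := A
    refine alg_mk_eq ?_
    apply CommaMorphism.ext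
    · show ((adjSE C).counit.app ((Galg C).obj ⟨Af, aa, hu, ha⟩)).u = aa.left
      rw [counit_u]
      apply coprod.hom_ext
      · exact (coprod.inl_desc _ _).trans (alg_inl ⟨Af, aa, hu, ha⟩).symm
      · exact coprod.inr_desc _ _
    · show ((adjSE C).counit.app ((Galg C).obj ⟨Af, aa, hu, ha⟩)).s = aa.right
      rw [counit_s]
      exact (alg_right ⟨Af, aa, hu, ha⟩).symm
  refine CategoryTheory.Functor.ext hobj (fun A B φ => ?_)
  apply Monad.Algebra.Hom.ext
  have h2 : (forgetSplitEpi C).map ((Galg C).map φ) = φ.f := by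
    apply CommaMorphism.ext <;> rfl
  show (forgetSplitEpi C).map ((Galg C).map φ) = _
  rw [h2]
  simp [eqToHom_f]
  erw [eqToHom_refl, eqToHom_refl, Category.id_comp, Category.comp_id]

lemma alg_free : ∀ (f : Arrow C) (a : (adjSE C).toMonad.obj f ⟶ f),
    (adjSE C).toMonad.η.app f ≫ a = 𝟙 f →
    (adjSE C).toMonad.μ.app f ≫ a = (adjSE C).toMonad.map a ≫ a := by
  intro f a h
  have hl : coprod.inl ≫ a.left = 𝟙 f.left := by
    have := congrArg CommaMorphism.left h
    simp [eta_left, unit_left] at this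
    exact this
  have hr : a.right = 𝟙 f.right := by
    have := congrArg CommaMorphism.right h
    simp [eta_right, unit_right] at this
    exact (Category.id_comp _).symm.trans this
  apply CommaMorphism.ext
  · show ((adjSE C).toMonad.μ.app f).left ≫ a.left
      = ((adjSE C).toMonad.map a).left ≫ a.left
    show coprod.desc (𝟙 (f.left ⨿ f.right)) (𝟙 f.right ≫ coprod.inr) ≫ a.left
        = coprod.map a.left a.right ≫ a.left
    apply coprod.hom_ext
    · erw [coprod.inl_desc_assoc, coprod.inl_map_assoc, hl, Category.id_comp, Category.comp_id]
    · erw [coprod.inr_desc_assoc, coprod.inr_map_assoc, hr]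
      exact Category.assoc _ _ _
  · show ((adjSE C).toMonad.μ.app f).right ≫ a.right
      = ((adjSE C).toMonad.map a).right ≫ a.right
    show 𝟙 f.right ≫ a.right = a.right ≫ a.right
    erw [hr]
    exact rfl

end SplitEpiAux



/-- If `C` has binary coproducts then the forgetful functor from split epimorphisms to the
arrow category is strictly monadic (it has a left adjoint and the comparison functor to the
Eilenberg–Moore category of the induced monad is an isomorphism of categories); moreover the
induced monad is algebraically free on its underlying pointed endofunctor: every algebra for
the pointed endofunctor automatically satisfies the monad associativity law. -/
theorem splitEpi_strictly_monadic_and_algebraically_free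
    {C : Type u} [Category.{v} C] [HasBinaryCoproducts C] :
    ∃ (F : Arrow C ⥤ SplitEpiObj C) (adj : F ⊣ forgetSplitEpi C)
      (G : adj.toMonad.Algebra ⥤ SplitEpiObj C),
      Monad.comparison adj ⋙ G = 𝟭 (SplitEpiObj C) ∧
      G ⋙ Monad.comparison adj = 𝟭 adj.toMonad.Algebra ∧
      (∀ (f : Arrow C) (a : adj.toMonad.obj f ⟶ f),
        adj.toMonad.η.app f ≫ a = 𝟙 f →
        adj.toMonad.μ.app f ≫ a = adj.toMonad.map a ≫ a) :=
  ⟨SplitEpiAux.freeF C, SplitEpiAux.adjSE C, SplitEpiAux.Galg C,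
    SplitEpiAux.comp_G_eq_id, SplitEpiAux.G_comp_eq_id, SplitEpiAux.alg_free⟩
end

section
/- In a 2-category K, for morphisms g : A → B and p : B → A with g ∘ p = 1_B, the following are equivalent: (1) g is left adjoint to p with identity counit; (2) for every object X and every x : A → X, y : B → X, precomposition with p gives a bijection between 2-cells x ⟹ y∘g and 2-cells x∘p ⟹ y; (3) there exists a (necessarily unique) 2-cell η : 1_A ⟹ p∘g with g∘η = 1_g and η∘p = 1_p. -/
open CategoryTheory
open scoped CategoryTheory.Bicategory

universe w v u

section AuxLemmas

variable {B : Type u} [Bicategory.{w, v} B]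

theorem lali_lz_eq {a b : B} {f : a ⟶ b} {g : b ⟶ a} (η : 𝟙 a ⟶ f ≫ g) (eps : g ≫ f ⟶ 𝟙 b) :
    Bicategory.leftZigzag η eps = η ▷ f ≫ (α_ f g f).hom ≫ f ◁ eps := by bicategory

theorem lali_rz_eq {a b : B} {f : a ⟶ b} {g : b ⟶ a} (η : 𝟙 a ⟶ f ≫ g) (eps : g ≫ f ⟶ 𝟙 b) :
    Bicategory.rightZigzag η eps = g ◁ η ≫ (α_ g f g).inv ≫ eps ▷ g := by bicategory

theorem lali_whiskerLeft_congr {a b c : B} {f f' : a ⟶ b}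
    (e : f = f') {u v : b ⟶ c} (β : u ⟶ v) :
    f ◁ β = eqToHom (by rw [e]) ≫ f' ◁ β ≫ eqToHom (by rw [e]) := by subst e; simp

end AuxLemmas

/-- In a 2-category, for `g : A ⟶ B` and `p : B ⟶ A` with `g ∘ p = 1_B`, the following are
equivalent: (1) `g` is left adjoint to `p` with identity counit; (2) for every `x : A ⟶ X`
and `y : B ⟶ X`, precomposition with `p` gives a bijection between 2-cells `x ⟹ y ∘ g` and
2-cells `x ∘ p ⟹ y`; (3) there is a 2-cell `η : 1_A ⟶ g ≫ p` with `g ∘ η = 1_g` and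
`η ∘ p = 1_p`. -/
theorem lali_tfae {B : Type u} [Bicategory.{w, v} B] [Bicategory.Strict B]
    {a b : B} (g : a ⟶ b) (p : b ⟶ a) (hpg : p ≫ g = 𝟙 b) :
    List.TFAE
      [ ∃ adj : Bicategory.Adjunction g p, adj.counit = eqToHom hpg,
        ∀ (X : B) (x : a ⟶ X) (y : b ⟶ X),
          Function.Bijective (fun α : x ⟶ g ≫ y =>
            (p ◁ α) ≫ eqToHom (show p ≫ g ≫ y = y by
              rw [← Bicategory.Strict.assoc, hpg, Bicategory.Strict.id_comp])),
        ∃ η : 𝟙 a ⟶ g ≫ p,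
          η ▷ g = eqToHom (show 𝟙 a ≫ g = (g ≫ p) ≫ g by
            rw [Bicategory.Strict.id_comp, Bicategory.Strict.assoc, hpg,
              Bicategory.Strict.comp_id]) ∧
          p ◁ η = eqToHom (show p ≫ 𝟙 a = p ≫ g ≫ p by
            rw [Bicategory.Strict.comp_id, ← Bicategory.Strict.assoc, hpg,
              Bicategory.Strict.id_comp]) ] := by
  tfae_have 1 → 3 := by
    rintro ⟨adj, hc⟩
    refine ⟨adj.unit, ?_, ?_⟩
    · have h := adj.left_triangle
      rw [lali_lz_eq, hc] at h
      simp only [Bicategory.Strict.associator_eqToIso, Bicategory.Strict.leftUnitor_eqToIso,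
        Bicategory.Strict.rightUnitor_eqToIso, eqToIso.hom, eqToIso.inv,
        Bicategory.whiskerLeft_eqToHom, eqToHom_trans, comp_eqToHom_iff, eqToHom_trans] at h ⊢
      rw [h]
    · have h := adj.right_triangle
      rw [lali_rz_eq, hc] at h
      simp only [Bicategory.Strict.associator_eqToIso, Bicategory.Strict.leftUnitor_eqToIso,
        Bicategory.Strict.rightUnitor_eqToIso, eqToIso.hom, eqToIso.inv,
        Bicategory.eqToHom_whiskerRight, eqToHom_trans, comp_eqToHom_iff, eqToHom_trans] at h ⊢
      rw [h]
  tfae_have 3 → 1 := by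
    rintro ⟨η, h1, h2⟩
    refine ⟨⟨η, eqToHom hpg, ?_, ?_⟩, rfl⟩
    · rw [lali_lz_eq]
      simp [Bicategory.Strict.associator_eqToIso, Bicategory.Strict.leftUnitor_eqToIso,
        Bicategory.Strict.rightUnitor_eqToIso, h1]
    · rw [lali_rz_eq]
      simp [Bicategory.Strict.associator_eqToIso, Bicategory.Strict.leftUnitor_eqToIso,
        Bicategory.Strict.rightUnitor_eqToIso, h2]
  tfae_have 3 → 2 := by
    rintro ⟨η, h1, h2⟩ X x y
    have e0 : x = 𝟙 a ≫ x := (Bicategory.Strict.id_comp x).symm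
    have e3 : (g ≫ p) ≫ x = g ≫ p ≫ x := Bicategory.Strict.assoc g p x
    have e4 : (g ≫ p) ≫ g ≫ y = g ≫ y := by
      rw [Bicategory.Strict.assoc, ← Bicategory.Strict.assoc p, hpg, Bicategory.Strict.id_comp]
    rw [Function.bijective_iff_has_inverse]
    refine ⟨fun β => eqToHom e0 ≫ η ▷ x ≫ eqToHom e3 ≫ g ◁ β, ?_, ?_⟩
    · intro α
      dsimp only
      calc eqToHom e0 ≫ η ▷ x ≫ eqToHom e3 ≫ g ◁ ((p ◁ α) ≫ eqToHom _)
          = eqToHom e0 ≫ (η ▷ x ≫ (g ≫ p) ◁ α) ≫ eqToHom e4 := by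
            simp only [Bicategory.whiskerLeft_comp, Bicategory.whiskerLeft_eqToHom,
              Bicategory.comp_whiskerLeft, Bicategory.Strict.associator_eqToIso,
              eqToIso.hom, eqToIso.inv, Category.assoc, eqToHom_trans, eqToHom_trans_assoc]
        _ = eqToHom e0 ≫ (𝟙 a ◁ α ≫ η ▷ (g ≫ y)) ≫ eqToHom e4 := by
            rw [← Bicategory.whisker_exchange]
        _ = α := by
            simp only [Bicategory.id_whiskerLeft, Bicategory.whiskerRight_comp, h1,
              Bicategory.Strict.leftUnitor_eqToIso, Bicategory.Strict.associator_eqToIso,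
              Bicategory.eqToHom_whiskerRight, eqToIso.hom, eqToIso.inv, Category.assoc,
              eqToHom_trans, eqToHom_trans_assoc, eqToHom_refl, Category.comp_id,
              Category.id_comp]
    · intro β
      dsimp only
      calc p ◁ (eqToHom e0 ≫ η ▷ x ≫ eqToHom e3 ≫ g ◁ β) ≫ eqToHom _
          = eqToHom (by rw [hpg]; simp) ≫ (p ≫ g) ◁ β ≫ eqToHom (by rw [hpg]; simp) := by
            simp only [Bicategory.whiskerLeft_comp, Bicategory.whiskerLeft_eqToHom,
              Bicategory.whisker_assoc_symm, h2, ← Bicategory.comp_whiskerLeft,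
              Bicategory.Strict.associator_eqToIso, Bicategory.eqToHom_whiskerRight,
              eqToIso.hom, eqToIso.inv, Category.assoc, eqToHom_trans, eqToHom_trans_assoc]
            rw [Bicategory.comp_whiskerLeft]
            simp [Bicategory.Strict.associator_eqToIso]
        _ = β := by
            rw [lali_whiskerLeft_congr hpg]
            simp only [Bicategory.id_whiskerLeft, Bicategory.Strict.leftUnitor_eqToIso,
              eqToIso.hom, eqToIso.inv, Category.assoc, eqToHom_trans, eqToHom_trans_assoc,
              eqToHom_refl, Category.comp_id, Category.id_comp]
  tfae_have 2 → 3 := by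
    intro h
    obtain ⟨η, hη⟩ := (h a (𝟙 a) p).2 (eqToHom (Bicategory.Strict.comp_id p))
    dsimp only at hη
    have h2 : p ◁ η = eqToHom (show p ≫ 𝟙 a = p ≫ g ≫ p by
        rw [Bicategory.Strict.comp_id, ← Bicategory.Strict.assoc, hpg,
          Bicategory.Strict.id_comp]) := by
      rw [comp_eqToHom_iff] at hη
      rw [hη]; simp
    refine ⟨η, ?_, h2⟩
    have egp : (g ≫ p) ≫ g = g ≫ p ≫ g := Bicategory.Strict.assoc g p g
    have eg : g = g ≫ p ≫ g := by rw [hpg, Bicategory.Strict.comp_id]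
    have e0 : g = 𝟙 a ≫ g := (Bicategory.Strict.id_comp g).symm
    have key := (h b g (p ≫ g)).1
      (a₁ := eqToHom e0 ≫ η ▷ g ≫ eqToHom egp) (a₂ := eqToHom eg) (by
        dsimp only
        rw [Bicategory.whiskerLeft_comp, Bicategory.whiskerLeft_comp,
          Bicategory.whiskerLeft_eqToHom, Bicategory.whiskerLeft_eqToHom,
          Bicategory.whiskerLeft_eqToHom,
          show p ◁ (η ▷ g) = eqToHom (Bicategory.Strict.assoc p (𝟙 a) g).symm ≫ (p ◁ η) ▷ g ≫
            eqToHom (Bicategory.Strict.assoc p (g ≫ p) g) by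
              rw [Bicategory.whisker_assoc_symm]; simp [Bicategory.Strict.associator_eqToIso],
          h2]
        simp)
    rw [eqToHom_comp_iff, comp_eqToHom_iff] at key
    rw [key]; simp
  tfae_finish
end

section
/- Lalis in Cat are not closed under retracts in the arrow category: there exist a functor f : A → 1 admitting lali structure (equivalently, A has a terminal object) and a retract g : B → 1 of f in Cat^2 such that g admits no lali structure (B has no terminal object). Concretely, take B the free category on one idempotent t with t∘t = t, and A obtained from B by freely adjoining a terminal object. -/
open CategoryTheory
open CategoryTheory.Limits

/-- `Bool` with `and` is an (idempotent) monoid; `SingleObj` of this monoid is the free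
category on one idempotent `t = false` with `t ∘ t = t`. -/
instance : Monoid Bool where
  mul := and
  one := true
  mul_assoc := by decide
  one_mul := by decide
  mul_one := by decide

/-- Lalis in `Cat` are not closed under retracts in the arrow category: there are a
category `A` with a terminal object (so that `A → 1` admits lali structure) and a retract
`B` of `A` (functors `i : B ⥤ A`, `r : A ⥤ B` with `i ⋙ r = 𝟭 B`, which is exactly a
retract `B → 1` of `A → 1` in `Cat²`) such that `B` has no terminal object (so that
`B → 1` admits no lali structure). -/
theorem lalis_not_retract_closed :
    ∃ (A B : Type) (_ : SmallCategory A) (_ : SmallCategory B)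
      (i : B ⥤ A) (r : A ⥤ B),
      i ⋙ r = 𝟭 B ∧ HasTerminal A ∧ ¬ HasTerminal B := by
  classical
  let B := SingleObj Bool
  refine ⟨WithTerminal B, B, inferInstance, inferInstance, WithTerminal.incl,
    WithTerminal.lift (𝟭 B)
      (fun _ => (show SingleObj.star Bool ⟶ SingleObj.star Bool from false)) ?_, ?_, ?_, ?_⟩
  · intro x y f
    show (false : Bool) * f = false
    exact (show ∀ b : Bool, (false : Bool) * b = false by decide) f
  · rfl
  · exact IsTerminal.hasTerminal WithTerminal.starTerminal
  · intro h
    have := terminal.hom_ext (C := B) (show ⊤_ B ⟶ ⊤_ B from (false : Bool)) (𝟙 _)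
    exact Bool.false_ne_true this
end

section
/- Let B be the category freely generated by a single idempotent t (one object, morphisms 1 and t with t∘t = t), and let A be B with a terminal object freely adjoined. Then A has a terminal object, the inclusion B → A admits a retraction r : A → B (fixing t and sending the unique map 0 → 1 to the identity on 0), but B has no terminal object. -/
open CategoryTheory
open CategoryTheory.Limits

/-- The category freely generated by a single idempotent `t` (`t ∘ t = t`): the one-object
category on the two-element monoid `{1, t}` with idempotent `t`. -/
abbrev FreeIdempotent : Type := CategoryTheory.SingleObj (WithOne PUnit.{1})

/-- Let `B` be the free category on one idempotent and `A` the category obtained from `B`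
by freely adjoining a terminal object.  Then `A` has a terminal object, the inclusion
`B ⥤ A` admits a retraction, but `B` has no terminal object. -/
theorem free_idempotent_retract_no_terminal :
    HasTerminal (WithTerminal FreeIdempotent) ∧
    (∃ r : WithTerminal FreeIdempotent ⥤ FreeIdempotent,
      WithTerminal.incl ⋙ r = 𝟭 FreeIdempotent) ∧
    ¬ HasTerminal FreeIdempotent := by
  refine ⟨hasTerminal_of_unique WithTerminal.star, ?_, ?_⟩
  · refine ⟨WithTerminal.lift (Z := SingleObj.star (WithOne PUnit.{1})) (𝟭 FreeIdempotent)
      (fun _ => ((PUnit.unit : PUnit) : WithOne PUnit.{1})) ?_, ?_⟩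
    · intro x y f
      rcases f with _ | f
      · rfl
      · rfl
    · rfl
  · intro h
    have h1 : (𝟙 (SingleObj.star (WithOne PUnit.{1})) :
        SingleObj.star (WithOne PUnit.{1}) ⟶ ⊤_ FreeIdempotent) =
        (((PUnit.unit : PUnit) : WithOne PUnit.{1}) :
          SingleObj.star (WithOne PUnit.{1}) ⟶ ⊤_ FreeIdempotent) := by
      exact terminalIsTerminal.hom_ext _ _
    exact WithOne.coe_ne_one h1.symm
end

section
/- Let C be a category, J a small category, and U : J → C^2 a functor. A map g : C → D of C equipped with a lifting operation against U corresponds precisely to a section of the natural transformation ψ_{-,g} : C(cod U(-), C) ⟹ C^2(U(-), g) of functors J^op → Set taking m : cod Uj → C to the square (m ∘ Uj, g ∘ m) : Uj → g. -/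
open CategoryTheory

universe w v u

variable {C : Type u} [Category.{v} C] {J : Type w} [Category.{v} J]

/-- The functor `J^op ⥤ Set`, `j ↦ C²(U j, g)` of commuting squares from `U j` to `g`. -/
def squaresFunctor (U : J ⥤ Arrow C) (g : Arrow C) : Jᵒᵖ ⥤ Type v :=
  U.op ⋙ yoneda.obj g

/-- The functor `J^op ⥤ Set`, `j ↦ C(cod (U j), dom g)` of candidate diagonals. -/
def diagonalsFunctor (U : J ⥤ Arrow C) (g : Arrow C) : Jᵒᵖ ⥤ Type v :=
  U.op ⋙ Arrow.rightFunc.op ⋙ yoneda.obj g.left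

/-- The natural transformation `ψ` sending `m : cod (U j) ⟶ dom g` to the square
`(m ∘ U j, g ∘ m) : U j → g`. -/
def ψnat (U : J ⥤ Arrow C) (g : Arrow C) :
    diagonalsFunctor U g ⟶ squaresFunctor U g where
  app j := TypeCat.ofHom fun (m : (U.obj j.unop).right ⟶ g.left) => Arrow.homMk (u := (U.obj j.unop).hom ≫ m) (v := m ≫ g.hom) (by simp)
  naturality j j' α := by
    ext (m : (U.obj j.unop).right ⟶ g.left)
    change Arrow.homMk (u := (U.obj j'.unop).hom ≫ ((U.map α.unop).right ≫ m))
        (v := ((U.map α.unop).right ≫ m) ≫ g.hom) (by simp) =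
      U.map α.unop ≫ Arrow.homMk (u := (U.obj j.unop).hom ≫ m) (v := m ≫ g.hom) (by simp)
    apply Arrow.hom_ext
    · have := Arrow.w (U.map α.unop)
      simp only [Arrow.homMk_left, Arrow.comp_left]
      rw [← Category.assoc, ← this, Category.assoc]
    · simp only [Arrow.homMk_right, Arrow.comp_right]
      rw [Category.assoc]

/-- A lifting operation on `g` against `U : J ⥤ C²`: a natural choice of diagonal fillers
for all squares `U j → g`. -/
structure LiftingOperation (U : J ⥤ Arrow C) (g : Arrow C) where
  fill : ∀ (j : J) (sq : U.obj j ⟶ g), (U.obj j).right ⟶ g.left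
  fill_left : ∀ (j : J) (sq : U.obj j ⟶ g), (U.obj j).hom ≫ fill j sq = sq.left
  fill_right : ∀ (j : J) (sq : U.obj j ⟶ g), fill j sq ≫ g.hom = sq.right
  natural : ∀ {j j' : J} (α : j ⟶ j') (sq : U.obj j' ⟶ g),
    fill j (U.map α ≫ sq) = (U.map α).right ≫ fill j' sq


def toSection (U : J ⥤ Arrow C) (g : Arrow C) (φ : LiftingOperation U g) :
    {σ : squaresFunctor U g ⟶ diagonalsFunctor U g //
      σ ≫ ψnat U g = 𝟙 (squaresFunctor U g)} :=
  ⟨{ app := fun j => TypeCat.ofHom fun sq => φ.fill j.unop sq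
     naturality := fun j j' α => by ext sq; exact φ.natural α.unop sq }, by
    ext j sq
    apply Arrow.hom_ext
    · exact φ.fill_left j.unop sq
    · exact φ.fill_right j.unop sq⟩

def ofSection (U : J ⥤ Arrow C) (g : Arrow C)
    (σ : {σ : squaresFunctor U g ⟶ diagonalsFunctor U g //
      σ ≫ ψnat U g = 𝟙 (squaresFunctor U g)}) : LiftingOperation U g where
  fill j sq := σ.1.app (Opposite.op j) sq
  fill_left j sq :=
    by
      have h := ConcreteCategory.congr_hom (congrFun (congrArg NatTrans.app σ.2) (Opposite.op j)) sq
      exact congrArg CommaMorphism.left h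
  fill_right j sq :=
    by
      have h := ConcreteCategory.congr_hom (congrFun (congrArg NatTrans.app σ.2) (Opposite.op j)) sq
      exact congrArg CommaMorphism.right h
  natural α sq := by
    have h := σ.1.naturality α.op
    exact ConcreteCategory.congr_hom h sq

/-- A map `g` of `C` equipped with a lifting operation against `U : J ⥤ C²` corresponds
precisely to a section of the natural transformation
`ψ : C(cod U(-), dom g) ⟹ C²(U(-), g)` taking `m` to the square `(m ∘ U j, g ∘ m)`. -/
theorem liftingOperation_equiv_section (U : J ⥤ Arrow C) (g : Arrow C) :
    ∃ e : LiftingOperation U g ≃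
        {σ : squaresFunctor U g ⟶ diagonalsFunctor U g //
          σ ≫ ψnat U g = 𝟙 (squaresFunctor U g)},
      ∀ (φ : LiftingOperation U g) (j : Jᵒᵖ) (sq : U.obj j.unop ⟶ g),
        ((e φ).1.app j) sq = φ.fill j.unop sq := by
  exact ⟨⟨toSection U g, ofSection U g, fun φ => rfl, fun σ => rfl⟩,
    fun φ j sq => rfl⟩
end

section
/- For a functor G : C → D, equipping the canonical comparison functor C^2 → D ↓ G with a right adjoint right inverse (a right adjoint section, i.e. rari structure) is equivalent to equipping G with the structure of a cloven Grothendieck fibration. -/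
open CategoryTheory

universe v₁ v₂ u₁ u₂

variable {C : Type u₁} {D : Type u₂} [Category.{v₁} C] [Category.{v₂} D]

/-- An arrow `f` of `C` is cartesian over `D` (with respect to `G : C ⥤ D`) if every
`g : z ⟶ y` together with a factorisation `G g = G f ∘ β` admits a unique lift of `β`
factoring `g` through `f`. -/
def IsCartesianArrow (G : C ⥤ D) {x y : C} (f : x ⟶ y) : Prop :=
  ∀ {z : C} (g : z ⟶ y) (β : G.obj z ⟶ G.obj x), β ≫ G.map f = G.map g →
    ∃! γ : z ⟶ x, G.map γ = β ∧ γ ≫ f = g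

/-- The canonical comparison functor `C² ⥤ D ↓ G`, sending `f : c' ⟶ c` to
`(G c', c, G f)`. -/
def toComma (G : C ⥤ D) : Arrow C ⥤ Comma (𝟭 D) G where
  obj f := { left := G.obj f.left, right := f.right, hom := G.map f.hom }
  map {f g} φ :=
    { left := G.map φ.left
      right := φ.right
      w := by
        dsimp
        rw [← G.map_comp, Arrow.w φ, G.map_comp] }
  map_id f := by apply CommaMorphism.ext <;> simp
  map_comp φ ψ := by apply CommaMorphism.ext <;> simp

/-- A right adjoint right inverse (rari) structure on a functor `F`: a section `S` of `F`
(`F ∘ S = Id`) which is right adjoint to `F`, the counit of the adjunction being the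
identity (via the equality `S ⋙ F = 𝟭`). -/
structure Rari {X : Type u₁} {Y : Type u₂} [Category.{v₁} X] [Category.{v₂} Y]
    (F : X ⥤ Y) where
  S : Y ⥤ X
  sec : S ⋙ F = 𝟭 Y
  adj : F ⊣ S
  counit_eq : adj.counit = eqToHom sec

/-- A cleavage on `G : C ⥤ D`: for every `c` and `β : d ⟶ G c`, a chosen cartesian arrow
over `β` with codomain `c`. -/
structure Cleavage (G : C ⥤ D) where
  obj : ∀ {c : C} {d : D}, (d ⟶ G.obj c) → C
  hom : ∀ {c : C} {d : D} (β : d ⟶ G.obj c), obj β ⟶ c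
  over' : ∀ {c : C} {d : D} (β : d ⟶ G.obj c), G.obj (obj β) = d
  map_eq : ∀ {c : C} {d : D} (β : d ⟶ G.obj c),
    G.map (hom β) = eqToHom (over' β) ≫ β
  cart : ∀ {c : C} {d : D} (β : d ⟶ G.obj c), IsCartesianArrow G (hom β)

noncomputable def IsCartesianArrow.lift {G : C ⥤ D} {x y : C} {f : x ⟶ y}
    (h : IsCartesianArrow G f) {z : C} (g : z ⟶ y) (β : G.obj z ⟶ G.obj x)
    (w : β ≫ G.map f = G.map g) : z ⟶ x := (h g β w).exists.choose

lemma IsCartesianArrow.lift_spec {G : C ⥤ D} {x y : C} {f : x ⟶ y}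
    (h : IsCartesianArrow G f) {z : C} (g : z ⟶ y) (β : G.obj z ⟶ G.obj x)
    (w : β ≫ G.map f = G.map g) :
    G.map (h.lift g β w) = β ∧ h.lift g β w ≫ f = g := (h g β w).exists.choose_spec

lemma IsCartesianArrow.hom_ext {G : C ⥤ D} {x y : C} {f : x ⟶ y}
    (h : IsCartesianArrow G f) {z : C} {g : z ⟶ y} {β : G.obj z ⟶ G.obj x}
    (w : β ≫ G.map f = G.map g) {γ₁ γ₂ : z ⟶ x}
    (h1 : G.map γ₁ = β) (h2 : γ₁ ≫ f = g) (h3 : G.map γ₂ = β) (h4 : γ₂ ≫ f = g) :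
    γ₁ = γ₂ := ((h g β w).unique ⟨h1, h2⟩ ⟨h3, h4⟩)

lemma comma_obj_ext {A : Type*} {B : Type*} {T : Type*} [Category A] [Category B] [Category T]
    {L : A ⥤ T} {R : B ⥤ T} {X Y : Comma L R} (h1 : X.left = Y.left) (h2 : X.right = Y.right)
    (h3 : X.hom = eqToHom (by rw [h1]) ≫ Y.hom ≫ eqToHom (by rw [h2])) : X = Y := by
  obtain ⟨xl, xr, xh⟩ := X; obtain ⟨yl, yr, yh⟩ := Y
  dsimp at h1 h2; subst h1; subst h2; simp at h3; subst h3; rfl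

lemma Cleavage.hom_congr {G : C ⥤ D} (cl : Cleavage G) {c : C} {d₁ d₂ : D} (h : d₁ = d₂)
    (β₁ : d₁ ⟶ G.obj c) (β₂ : d₂ ⟶ G.obj c) (hb : β₁ = eqToHom h ≫ β₂) :
    ∃ q : cl.obj β₁ = cl.obj β₂, cl.hom β₁ = eqToHom q ≫ cl.hom β₂ := by
  subst h; simp at hb; subst hb; exact ⟨rfl, by simp⟩

section S
variable {G : C ⥤ D} (cl : Cleavage G)

lemma lift_cond {X Y : Comma (𝟭 D) G} (φ : X ⟶ Y) :
    (eqToHom (cl.over' X.hom) ≫ φ.left ≫ eqToHom (cl.over' Y.hom).symm) ≫ G.map (cl.hom Y.hom)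
      = G.map (cl.hom X.hom ≫ φ.right) := by
  have w := φ.w
  dsimp at w
  simp [cl.map_eq, ← w]

/-- The section functor. -/
noncomputable def secFun : Comma (𝟭 D) G ⥤ Arrow C where
  obj X := Arrow.mk (cl.hom X.hom)
  map {X Y} φ :=
    Arrow.homMk (IsCartesianArrow.lift (cl.cart Y.hom) (cl.hom X.hom ≫ φ.right) _ (lift_cond cl φ))
      φ.right
      (by
        dsimp
        exact (IsCartesianArrow.lift_spec (cl.cart Y.hom) _ _ (lift_cond cl φ)).2)
  map_id X := by
    apply Arrow.hom_ext
    · exact IsCartesianArrow.hom_ext (cl.cart X.hom) (lift_cond cl (𝟙 X))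
        (IsCartesianArrow.lift_spec (cl.cart X.hom) _ _ (lift_cond cl (𝟙 X))).1
        (IsCartesianArrow.lift_spec (cl.cart X.hom) _ _ (lift_cond cl (𝟙 X))).2
        (by simp) (by simp)
    · rfl
  map_comp {X Y Z} φ ψ := by
    apply Arrow.hom_ext
    · refine IsCartesianArrow.hom_ext (cl.cart Z.hom) (lift_cond cl (φ ≫ ψ))
        (IsCartesianArrow.lift_spec (cl.cart Z.hom) _ _ (lift_cond cl (φ ≫ ψ))).1
        (IsCartesianArrow.lift_spec (cl.cart Z.hom) _ _ (lift_cond cl (φ ≫ ψ))).2 ?_ ?_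
      · simp [(IsCartesianArrow.lift_spec (cl.cart Y.hom) _ _ (lift_cond cl φ)).1,
          (IsCartesianArrow.lift_spec (cl.cart Z.hom) _ _ (lift_cond cl ψ)).1]
      · simp [(IsCartesianArrow.lift_spec (cl.cart Z.hom) _ _ (lift_cond cl ψ)).2,
          reassoc_of% (IsCartesianArrow.lift_spec (cl.cart Y.hom) _ _ (lift_cond cl φ)).2]
    · rfl

lemma secFun_sec : secFun cl ⋙ toComma G = 𝟭 (Comma (𝟭 D) G) := by
  have hobj : ∀ X, (secFun cl ⋙ toComma G).obj X = (𝟭 (Comma (𝟭 D) G)).obj X :=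
    fun X => comma_obj_ext (cl.over' X.hom) rfl (by simp [toComma, secFun, cl.map_eq])
  refine CategoryTheory.Functor.ext hobj (fun X Y φ => ?_)
  apply CommaMorphism.ext
  · simp only [Comma.comp_left, Comma.eqToHom_left]
    simp [toComma, secFun, (IsCartesianArrow.lift_spec (cl.cart Y.hom) _ _ (lift_cond cl φ)).1]
  · simp only [Comma.comp_right, Comma.eqToHom_right]
    simp [toComma, secFun]
    exact (Category.id_comp _).symm
end S

section Adj
variable {G : C ⥤ D} (cl : Cleavage G)

lemma unit_cond (A : Arrow C) :
    eqToHom (cl.over' (G.map A.hom)).symm ≫ G.map (cl.hom (G.map A.hom)) = G.map A.hom := by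
  simp [cl.map_eq]

noncomputable def unitApp (A : Arrow C) : A ⟶ (secFun cl).obj ((toComma G).obj A) :=
  { left := IsCartesianArrow.lift (cl.cart (G.map A.hom)) A.hom
      (eqToHom (cl.over' (G.map A.hom)).symm) (unit_cond cl A)
    right := 𝟙 A.right
    w := by
      dsimp [secFun, toComma]
      simpa using (IsCartesianArrow.lift_spec (cl.cart (G.map A.hom)) A.hom
        (eqToHom (cl.over' (G.map A.hom)).symm) (unit_cond cl A)).2 }

lemma unitApp_left (A : Arrow C) : Arrow.Hom.left (unitApp cl A) =
    IsCartesianArrow.lift (cl.cart (G.map A.hom)) A.hom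
      (eqToHom (cl.over' (G.map A.hom)).symm) (unit_cond cl A) := rfl

lemma unitApp_right (A : Arrow C) : Arrow.Hom.right (unitApp cl A) = 𝟙 A.right := rfl

lemma secFun_map_left {X Y : Comma (𝟭 D) G} (φ : X ⟶ Y) : Arrow.Hom.left ((secFun cl).map φ) =
    IsCartesianArrow.lift (cl.cart Y.hom) (cl.hom X.hom ≫ φ.right) _ (lift_cond cl φ) := rfl

lemma secFun_map_right {X Y : Comma (𝟭 D) G} (φ : X ⟶ Y) :
    Arrow.Hom.right ((secFun cl).map φ) = φ.right := rfl

noncomputable def cleavageRari : Rari (toComma G) where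
  S := secFun cl
  sec := secFun_sec cl
  adj :=
    { unit :=
      { app := unitApp cl
        naturality := by
          intro A B ψ
          apply Arrow.hom_ext
          · dsimp only [Functor.id_map, Functor.comp_map, Arrow.comp_left, Arrow.comp_right, unitApp_left, unitApp_right, secFun_map_left, secFun_map_right]
            dsimp [unitApp, secFun, toComma]
            have sB := IsCartesianArrow.lift_spec (cl.cart (G.map B.hom)) B.hom
              (eqToHom (cl.over' (G.map B.hom)).symm) (unit_cond cl B)
            have sA := IsCartesianArrow.lift_spec (cl.cart (G.map A.hom)) A.hom
              (eqToHom (cl.over' (G.map A.hom)).symm) (unit_cond cl A)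
            have sphi := IsCartesianArrow.lift_spec (cl.cart (G.map B.hom)) _ _
              (lift_cond cl ((toComma G).map ψ))
            dsimp [toComma] at sphi
            refine IsCartesianArrow.hom_ext (cl.cart (G.map B.hom)) (g := A.hom ≫ ψ.right)
              (β := G.map ψ.left ≫ eqToHom (cl.over' (G.map B.hom)).symm) ?_ ?_ ?_ ?_ ?_
            · rw [Category.assoc, cl.map_eq]
              simp only [eqToHom_trans_assoc, eqToHom_refl, Category.id_comp]
              rw [← G.map_comp, Arrow.w]
            · rw [G.map_comp, sB.1]
            · rw [Category.assoc, sB.2, Arrow.w]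
            · rw [G.map_comp, sA.1, sphi.1]
              erw [eqToHom_trans_assoc]
              exact Category.id_comp _
            · rw [Category.assoc, sphi.2]
              rw [reassoc_of% sA.2]
          · dsimp only [Functor.id_map, Functor.comp_map, Arrow.comp_left, Arrow.comp_right, unitApp_left, unitApp_right, secFun_map_left, secFun_map_right]
            simp [unitApp, secFun, toComma] }
      counit := eqToHom (secFun_sec cl)
      left_triangle_components := by
        intro A
        apply CommaMorphism.ext
        · simp only [Comma.comp_left, Comma.comp_right, eqToHom_app, Comma.eqToHom_left, Comma.eqToHom_right]
          dsimp [unitApp, secFun, toComma]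
          have sA := IsCartesianArrow.lift_spec (cl.cart (G.map A.hom)) A.hom
            (eqToHom (cl.over' (G.map A.hom)).symm) (unit_cond cl A)
          rw [sA.1]
          exact (eqToHom_trans _ _).trans (eqToHom_refl _ _)
        · simp only [Comma.comp_left, Comma.comp_right, eqToHom_app, Comma.eqToHom_left, Comma.eqToHom_right]
          dsimp [unitApp, secFun, toComma]
          simp [eqToHom_app]
      right_triangle_components := by
        intro X
        apply Arrow.hom_ext
        · dsimp only [Functor.id_map, Functor.comp_map, Arrow.comp_left, Arrow.comp_right, unitApp_left, unitApp_right, secFun_map_left, secFun_map_right]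
          simp only [Comma.comp_left, Comma.comp_right, eqToHom_app, Comma.eqToHom_left, Comma.eqToHom_right]
          dsimp [unitApp, secFun, toComma]
          have sX := IsCartesianArrow.lift_spec (cl.cart (G.map (cl.hom X.hom))) (cl.hom X.hom)
            (eqToHom (cl.over' (G.map (cl.hom X.hom))).symm)
            (unit_cond cl (Arrow.mk (cl.hom X.hom)))
          have sc := IsCartesianArrow.lift_spec (cl.cart X.hom) _ _
            (lift_cond cl ((eqToHom (secFun_sec cl)).app X))
          simp only [eqToHom_app, Comma.eqToHom_left, Comma.eqToHom_right] at sc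
          dsimp [toComma, secFun] at sc
          refine IsCartesianArrow.hom_ext (cl.cart X.hom) (g := cl.hom X.hom)
            (β := 𝟙 _) (by simp) ?_ ?_ (by simp) (by simp)
          · rw [G.map_comp, sX.1, sc.1]
            dsimp [toComma]
            exact (eqToHom_trans_assoc ..).trans ((eqToHom_trans_assoc ..).trans
              ((eqToHom_trans _ _).trans (eqToHom_refl _ _)))
          · rw [Category.assoc, sc.2]
            dsimp [toComma]
            rw [reassoc_of% sX.2]
            simp [eqToHom_app]
        · dsimp only [Functor.id_map, Functor.comp_map, Arrow.comp_left, Arrow.comp_right, unitApp_left, unitApp_right, secFun_map_left, secFun_map_right]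
          simp only [Comma.comp_left, Comma.comp_right, eqToHom_app, Comma.eqToHom_left, Comma.eqToHom_right]
          dsimp [unitApp, secFun, toComma]
          simp [eqToHom_app] }
  counit_eq := rfl
end Adj

section FromRari
variable {G : C ⥤ D} (R : Rari (toComma G))

lemma rari_obj_eq {c : C} {d : D} (β : d ⟶ G.obj c) :
    (toComma G).obj (R.S.obj { left := d, right := c, hom := β }) =
      { left := d, right := c, hom := β } :=
  Functor.congr_obj R.sec _

lemma rari_left_eq {c : C} {d : D} (β : d ⟶ G.obj c) :
    G.obj (R.S.obj { left := d, right := c, hom := β }).left = d :=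
  congrArg Comma.left (rari_obj_eq R β)

lemma rari_right_eq {c : C} {d : D} (β : d ⟶ G.obj c) :
    (R.S.obj { left := d, right := c, hom := β }).right = c :=
  congrArg Comma.right (rari_obj_eq R β)

lemma rari_w {c : C} {d : D} (β : d ⟶ G.obj c) :
    eqToHom (rari_left_eq R β) ≫ β =
      G.map (R.S.obj { left := d, right := c, hom := β }).hom ≫
        eqToHom (congrArg G.obj (rari_right_eq R β)) := by
  have hw := (eqToHom (rari_obj_eq R β)).w
  simp only [Comma.eqToHom_left, Comma.eqToHom_right] at hw
  simp only [Functor.id_map, eqToHom_map,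
    toComma] at hw
  exact hw.trans (congrArg (_ ≫ ·) (eqToHom_map _ _))

lemma rari_map_eq {c : C} {d : D} (β : d ⟶ G.obj c) :
    G.map ((R.S.obj { left := d, right := c, hom := β }).hom ≫
        eqToHom (rari_right_eq R β)) = eqToHom (rari_left_eq R β) ≫ β := by
  rw [G.map_comp, eqToHom_map, ← rari_w R β]

noncomputable def rariCleavage : Cleavage G where
  obj {c d} β := (R.S.obj { left := d, right := c, hom := β }).left
  hom {c d} β := (R.S.obj { left := d, right := c, hom := β }).hom ≫
    eqToHom (rari_right_eq R β)
  over' {c d} β := rari_left_eq R β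
  map_eq {c d} β := rari_map_eq R β
  cart {c d} β := by
    intro z g β' hcond
    have hm : ((β' ≫ eqToHom (rari_left_eq R β)) ≫ β =
        G.map g ≫ G.map (𝟙 c)) := by
      rw [G.map_comp, eqToHom_map] at hcond
      rw [Category.assoc, show eqToHom (rari_left_eq R β) ≫ β = _ from rari_w R β]
      simpa using hcond
    let m : (toComma G).obj (Arrow.mk g) ⟶ { left := d, right := c, hom := β } :=
      { left := β' ≫ eqToHom (rari_left_eq R β)
        right := 𝟙 c
        w := hm }
    let φ := R.adj.homEquiv (Arrow.mk g) _ m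
    have hsymm0 : (R.adj.homEquiv (Arrow.mk g) _).symm φ = m := Equiv.symm_apply_apply _ _
    have hsymm := hsymm0
    rw [Adjunction.homEquiv_counit, R.counit_eq] at hsymm
    have happ : (eqToHom R.sec).app { left := d, right := c, hom := β } =
        eqToHom (rari_obj_eq R β) := by simp [eqToHom_app]
    rw [happ] at hsymm
    have keyl := congrArg CommaMorphism.left hsymm
    have keyr := congrArg CommaMorphism.right hsymm
    simp only [Comma.comp_left, Comma.comp_right, Comma.eqToHom_left, Comma.eqToHom_right] at keyl keyr
    simp only [toComma] at keyl keyr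
    -- keyl : G.map φ.left ≫ eqToHom _ = β' ≫ eqToHom _
    -- keyr : φ.right ≫ eqToHom _ = 𝟙 c
    have keyl' : G.map φ.left = β' := by
      exact (cancel_mono (eqToHom (rari_left_eq R β))).1 keyl
    have keyr' : φ.right = eqToHom (rari_right_eq R β).symm := by
      exact (cancel_mono (eqToHom (rari_right_eq R β))).1 (keyr.trans (by simp [m]))
    refine ⟨φ.left, ⟨keyl', ?_⟩, ?_⟩
    · have hw := φ.w
      dsimp at hw
      rw [← Category.assoc, hw, Category.assoc, keyr']
      simp
    · rintro γ' ⟨hg1, hg2⟩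
      let ψ : Arrow.mk g ⟶ R.S.obj { left := d, right := c, hom := β } :=
        { left := γ'
          right := eqToHom (rari_right_eq R β).symm
          w := by
            dsimp
            rw [← hg2]
            simp }
      have : (R.adj.homEquiv (Arrow.mk g) _).symm ψ = m := by
        rw [Adjunction.homEquiv_counit, R.counit_eq, happ]
        apply CommaMorphism.ext
        · simp [toComma, ψ, m, hg1]
          congr 1
          exact Comma.eqToHom_left _ _ _ _ _
        · simp [toComma, ψ, m]
          erw [Comma.eqToHom_right, eqToHom_trans]
          exact eqToHom_refl _ _
          exact (rari_right_eq R β).symm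
      have hψ : ψ = φ := by
        apply (R.adj.homEquiv (Arrow.mk g) _).symm.injective
        rw [this, hsymm0]
      rw [← hψ]
end FromRari


/-- Equipping the canonical comparison functor `C² ⥤ D ↓ G` with a right adjoint right
inverse is equivalent to equipping `G` with the structure of a cloven Grothendieck
fibration. -/
theorem rari_toComma_iff_cleavage (G : C ⥤ D) :
    Nonempty (Rari (toComma G)) ↔ Nonempty (Cleavage G) := by
  constructor
  · rintro ⟨R⟩; exact ⟨rariCleavage R⟩
  · rintro ⟨cl⟩; exact ⟨cleavageRari cl⟩
end
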